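/- arXiv:2212.04470 — 5 statements merged into one kernel-verified Lean document; each statement's English description precedes it below -/
import Mathlib

section
/- Let N ≥ 1, let C ∈ ℝ^{N×N} be symmetric positive definite, let f(x) = (2π)^{-N/2} (det C)^{-1/2} exp(−(1/2) xᵀ C⁻¹ x) be the centered Gaussian density with covariance C, and let r ∈ {−1, +1}^N. Define the orthant O(r) = {x ∈ ℝ^N : r_n x_n > 0 for all n}. For each n, let K^{(n)} ∈ ℝ^{(N−1)×(N−1)} be the matrix obtained from C⁻¹ by deleting its n-th row and column, let g_n(x) = (2π)^{-(N−1)/2} (det K^{(n)})^{1/2} exp(−(1/2) xᵀ K^{(n)} x) be the Gaussian density on ℝ^{N−1} with precision matrix K^{(n)}, and let O_n(r) ⊂ ℝ^{N−1} be the orthant determined by the vector r with its n-th entry deleted. Then for every index i, ∫_{O(r)} x_i f(x) dx = Σ_{n=1}^{N} r_n · C_{i,n} · (2π C_{n,n})^{−1/2} · ∫_{O_n(r)} g_n(x) dx. -/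
open MeasureTheory Matrix Real Set Filter

-- Jacobi: det of principal minor of A equals diagonal adjugate entry
lemma det_sub_eq_adj {N : ℕ} (A : Matrix (Fin (N+1)) (Fin (N+1)) ℝ) (n : Fin (N+1)) :
    (A.submatrix n.succAbove n.succAbove).det = A.adjugate n n := by
  rw [Matrix.adjugate_apply, Matrix.det_succ_row _ n]
  rw [Finset.sum_eq_single n]
  · have h1 : (A.updateRow n (Pi.single n 1)) n n = 1 := by simp
    have h2 : (A.updateRow n (Pi.single n 1)).submatrix n.succAbove n.succAbove
        = A.submatrix n.succAbove n.succAbove := by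
      ext a b
      simp [Matrix.submatrix_apply, Matrix.updateRow_ne (Fin.succAbove_ne n a)]
    rw [h1, h2, Even.neg_one_pow ⟨n, rfl⟩]
    ring
  · intro j _ hj
    have : (A.updateRow n (Pi.single n 1)) n j = 0 := by
      simp [Pi.single_apply, hj]
    rw [this]; ring
  · simp


lemma cont_quad {N : ℕ} (A : Matrix (Fin N) (Fin N) ℝ) :
    Continuous fun x : Fin N → ℝ => x ⬝ᵥ A *ᵥ x := by
  unfold dotProduct Matrix.mulVec dotProduct
  fun_prop

lemma quad_smul {N : ℕ} (A : Matrix (Fin N) (Fin N) ℝ) (c : ℝ) (x : Fin N → ℝ) :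
    (c • x) ⬝ᵥ A *ᵥ (c • x) = c^2 * (x ⬝ᵥ A *ᵥ x) := by
  rw [Matrix.mulVec_smul, dotProduct_smul, smul_dotProduct]
  simp [smul_smul, sq]
  ring

lemma quad_lower {N : ℕ} (A : Matrix (Fin N) (Fin N) ℝ) (hA : A.PosDef) :
    ∃ ε > 0, ∀ x : Fin N → ℝ, ε * ∑ i, (x i)^2 ≤ x ⬝ᵥ A *ᵥ x := by
  rcases Nat.eq_zero_or_pos N with h | h
  · exact ⟨1, one_pos, fun x => by subst h; simp [dotProduct]⟩
  set S : Set (Fin N → ℝ) := {x | ∑ i, (x i)^2 = 1} with hS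
  have hScomp : IsCompact S := by
    have hclosed : IsClosed S :=
      isClosed_eq (by fun_prop) continuous_const
    have hbdd : Bornology.IsBounded S := by
      apply isBounded_iff_forall_norm_le.2 ⟨1, fun x hx => ?_⟩
      rw [pi_norm_le_iff_of_nonneg zero_le_one]
      intro i
      have h1 : (x i)^2 ≤ 1 := by
        rw [← hx]
        exact Finset.single_le_sum (fun j _ => sq_nonneg (x j)) (Finset.mem_univ i)
      rw [Real.norm_eq_abs]
      nlinarith [sq_nonneg (|x i| - 1), sq_abs (x i), abs_nonneg (x i)]
    exact Metric.isCompact_of_isClosed_isBounded hclosed hbdd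
  have hSne : S.Nonempty := by
    refine ⟨Pi.single ⟨0, h⟩ 1, ?_⟩
    simp [hS, Pi.single_apply, Finset.sum_ite_eq']
  obtain ⟨x₀, hx₀S, hx₀min⟩ := hScomp.exists_isMinOn hSne (cont_quad A).continuousOn
  have hx₀ne : x₀ ≠ 0 := by
    intro h0
    rw [hS] at hx₀S
    simp [h0] at hx₀S
  refine ⟨x₀ ⬝ᵥ A *ᵥ x₀, by simpa [star_trivial] using hA.dotProduct_mulVec_pos hx₀ne, fun x => ?_⟩
  rcases eq_or_ne x 0 with rfl | hx
  · simp [dotProduct]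
  · have hsum : 0 < ∑ i, (x i)^2 := by
      have : ∃ i, x i ≠ 0 := by
        by_contra hc
        push_neg at hc
        exact hx (funext hc)
      obtain ⟨i, hi⟩ := this
      exact Finset.sum_pos' (fun j _ => sq_nonneg _) ⟨i, Finset.mem_univ i, by positivity⟩
    set t := Real.sqrt (∑ i, (x i)^2) with ht
    have hs : 0 < t := Real.sqrt_pos.2 hsum
    have ht2 : t^2 = ∑ i, (x i)^2 := Real.sq_sqrt hsum.le
    have hy : (t⁻¹ • x) ∈ S := by
      simp only [hS, Set.mem_setOf_eq, Pi.smul_apply, smul_eq_mul, mul_pow]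
      rw [← Finset.mul_sum, ← ht2]
      field_simp
    have hmin := hx₀min hy
    have hq : x ⬝ᵥ A *ᵥ x = t^2 * ((t⁻¹ • x) ⬝ᵥ A *ᵥ (t⁻¹ • x)) := by
      rw [quad_smul]
      field_simp
    rw [hq, ← ht2]
    have h2 : (0:ℝ) < t^2 := by positivity
    calc (x₀ ⬝ᵥ A *ᵥ x₀) * t^2 ≤ ((t⁻¹ • x) ⬝ᵥ A *ᵥ (t⁻¹ • x)) * t^2 := by
          exact mul_le_mul_of_nonneg_right hmin h2.le
      _ = t^2 * ((t⁻¹ • x) ⬝ᵥ A *ᵥ (t⁻¹ • x)) := by ring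

lemma integrable_weight {N : ℕ} (A : Matrix (Fin N) (Fin N) ℝ) (hA : A.PosDef) :
    Integrable (fun x : Fin N → ℝ =>
      (∏ j, (1 + |x j|)) * Real.exp (-(1/2) * (x ⬝ᵥ A *ᵥ x))) := by
  obtain ⟨ε, hε, hbound⟩ := quad_lower A hA
  have h1 : Integrable (fun t : ℝ => Real.exp (-(ε/2) * t^2)) :=
    integrable_exp_neg_mul_sq (by positivity)
  have h2 : Integrable (fun t : ℝ => |t| * Real.exp (-(ε/2) * t^2)) := by
    refine (integrable_mul_exp_neg_mul_sq (b := ε/2) (by positivity)).abs.congr ?_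
    filter_upwards with t
    rw [abs_mul, abs_of_pos (Real.exp_pos _)]
  have hint1 : Integrable (fun t : ℝ => (1 + |t|) * Real.exp (-(ε/2) * t^2)) := by
    refine (h1.add h2).congr (Filter.Eventually.of_forall fun t => ?_)
    simp only [Pi.add_apply]
    ring
  have hprod : Integrable (fun x : Fin N → ℝ =>
      ∏ j, (1 + |x j|) * Real.exp (-(ε/2) * (x j)^2)) :=
    Integrable.fintype_prod (f := fun _ t => (1 + |t|) * Real.exp (-(ε/2) * t^2))
      (fun _ => hint1)
  refine hprod.mono' ?_ ?_
  · refine Continuous.aestronglyMeasurable ?_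
    have : Continuous fun x : Fin N → ℝ => ∏ j, (1 + |x j|) := by fun_prop
    exact this.mul ((Real.continuous_exp).comp ((continuous_const).mul (cont_quad A)))
  · filter_upwards with x
    have hp : (0:ℝ) ≤ ∏ j, (1 + |x j|) :=
      Finset.prod_nonneg fun j _ => by positivity
    rw [Real.norm_eq_abs, abs_mul, abs_of_nonneg hp, abs_of_pos (Real.exp_pos _)]
    rw [Finset.prod_mul_distrib]
    refine mul_le_mul_of_nonneg_left ?_ hp
    rw [← Real.exp_sum]
    apply Real.exp_le_exp.2
    have := hbound x
    have hsum : ∑ j, -(ε/2) * (x j)^2 = -(ε/2) * ∑ j, (x j)^2 := by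
      rw [Finset.mul_sum]
    rw [hsum]
    nlinarith [hbound x]


lemma line_deriv (c0 α β γ : ℝ) (t : ℝ) :
    HasDerivAt (fun s => c0 * Real.exp (-(1/2) * (α*s^2 + 2*β*s + γ)))
      (-(α*t+β) * (c0 * Real.exp (-(1/2) * (α*t^2 + 2*β*t + γ)))) t := by
  have hu : HasDerivAt (fun s => -(1/2) * (α*s^2 + 2*β*s + γ)) (-(α*t+β)) t := by
    have h1 : HasDerivAt (fun s : ℝ => α*s^2 + 2*β*s + γ) (α*(2*t) + 2*β) t := by
      have := (((hasDerivAt_pow 2 t).const_mul α).add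
        ((hasDerivAt_id t).const_mul (2*β))).add_const γ
      simpa [pow_one] using this
    have := h1.const_mul (-(1/2) : ℝ)
    rw [show -(α*t+β) = -(1/2) * (α*(2*t)+2*β) by ring]
    exact this
  have := hu.exp.const_mul c0
  rw [show -(α*t+β) * (c0 * Real.exp (-(1/2) * (α*t^2 + 2*β*t + γ)))
      = c0 * (Real.exp (-(1/2) * (α*t^2 + 2*β*t + γ)) * -(α*t+β)) by ring]
  exact this

lemma line_integrable (c0 α β γ : ℝ) (hα : 0 < α) :
    Integrable (fun t => (α*t+β) * (c0 * Real.exp (-(1/2) * (α*t^2 + 2*β*t + γ)))) := by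
  have key : ∀ t : ℝ, (α*t+β) * (c0 * Real.exp (-(1/2) * (α*t^2 + 2*β*t + γ)))
      = (α * c0 * Real.exp (-(1/2)*(γ - β^2/α)))
        * ((t - (-(β/α))) * Real.exp (-(α/2) * (t - (-(β/α)))^2)) := by
    intro t
    have hexp : Real.exp (-(1/2) * (α*t^2 + 2*β*t + γ))
        = Real.exp (-(α/2) * (t - (-(β/α)))^2) * Real.exp (-(1/2)*(γ - β^2/α)) := by
      rw [← Real.exp_add]
      congr 1
      field_simp
      ring
    rw [hexp]
    field_simp
    ring
  simp_rw [key]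
  exact ((integrable_mul_exp_neg_mul_sq (by positivity : (0:ℝ) < α/2)).comp_sub_right
    (-(β/α))).const_mul _

lemma line_tendsto (c0 α β γ : ℝ) (hα : 0 < α) :
    Filter.Tendsto (fun t => c0 * Real.exp (-(1/2) * (α*t^2 + 2*β*t + γ)))
      Filter.atTop (nhds 0) ∧
    Filter.Tendsto (fun t => c0 * Real.exp (-(1/2) * (α*t^2 + 2*β*t + γ)))
      Filter.atBot (nhds 0) := by
  have key : ∀ t : ℝ, α*t^2 + 2*β*t + γ = α * (t + β/α)^2 + (γ - β^2/α) := by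
    intro t; field_simp; ring
  have h0 : ∀ l : Filter ℝ, Filter.Tendsto (fun t : ℝ => (t + β/α)^2) l Filter.atTop →
      Filter.Tendsto (fun t => c0 * Real.exp (-(1/2) * (α*t^2 + 2*β*t + γ))) l (nhds 0) := by
    intro l hl
    have h1 : Filter.Tendsto (fun t : ℝ => α*t^2 + 2*β*t + γ) l Filter.atTop := by
      simp_rw [key]
      exact Filter.tendsto_atTop_add_const_right _ _ (hl.const_mul_atTop hα)
    have h2 : Filter.Tendsto (fun t : ℝ => -(1/2) * (α*t^2 + 2*β*t + γ)) l Filter.atBot := by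
      have := h1.const_mul_atTop (by norm_num : (0:ℝ) < 1/2)
      have h3 := (tendsto_neg_atTop_atBot).comp this
      convert h3 using 2 with t
      simp only [Function.comp_apply]
      ring
    have := (Real.tendsto_exp_atBot.comp h2).const_mul c0
    simpa using this
  constructor
  · refine h0 _ ?_
    have h1 : Filter.Tendsto (fun t : ℝ => t + β/α) Filter.atTop Filter.atTop :=
      Filter.tendsto_atTop_add_const_right _ _ Filter.tendsto_id
    exact (tendsto_pow_atTop (by norm_num)).comp h1
  · refine h0 _ ?_
    have h1 : Filter.Tendsto (fun t : ℝ => -(t + β/α)) Filter.atBot Filter.atTop := by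
      have := Filter.tendsto_atTop_add_const_right Filter.atBot (-(β/α))
        (tendsto_neg_atBot_atTop (G := ℝ))
      convert this using 2 with t
      ring
    have h2 := (tendsto_pow_atTop (by norm_num : 2 ≠ 0)).comp h1
    convert h2 using 2 with t
    simp only [Function.comp_apply]
    ring

lemma line_integral (c0 α β γ : ℝ) (hα : 0 < α) (ρ : ℝ) (hρ : ρ = 1 ∨ ρ = -1) :
    ∫ t in {t : ℝ | ρ * t > 0}, (α*t+β) * (c0 * Real.exp (-(1/2) * (α*t^2 + 2*β*t + γ)))
      = ρ * (c0 * Real.exp (-(1/2) * γ)) := by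
  have key : ∀ β' : ℝ, ∫ t in Set.Ioi (0:ℝ),
      (α*t+β') * (c0 * Real.exp (-(1/2) * (α*t^2 + 2*β'*t + γ)))
      = c0 * Real.exp (-(1/2) * γ) := by
    intro β'
    set F : ℝ → ℝ := fun s => c0 * Real.exp (-(1/2) * (α*s^2 + 2*β'*s + γ)) with hF
    have hFd : ∀ t ∈ Set.Ioi (0:ℝ), HasDerivAt F (-(α*t+β') * F t) t :=
      fun t _ => line_deriv c0 α β' γ t
    have hcont : ContinuousWithinAt F (Set.Ici 0) 0 := by
      apply Continuous.continuousWithinAt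
      fun_prop
    have hint : IntegrableOn (fun t => -(α*t+β') * F t) (Set.Ioi 0) := by
      have := (line_integrable c0 α β' γ hα).neg
      refine this.integrableOn.congr_fun (fun t _ => by simp [hF]; ring) measurableSet_Ioi
    have htend : Filter.Tendsto F Filter.atTop (nhds 0) := (line_tendsto c0 α β' γ hα).1
    have := integral_Ioi_of_hasDerivAt_of_tendsto hcont hFd hint htend
    have h0 : F 0 = c0 * Real.exp (-(1/2) * γ) := by simp [hF]
    rw [h0] at this
    have : ∫ t in Set.Ioi (0:ℝ), (α*t+β') * F t
        = -(0 - c0 * Real.exp (-(1/2) * γ)) := by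
      rw [← this, ← integral_neg]
      congr 1 with t
      ring
    rw [this]
    ring
  rcases hρ with h1 | h1
  · subst h1
    have hset : {t : ℝ | (1:ℝ) * t > 0} = Set.Ioi 0 := by
      ext t; simp
    rw [hset, key β, one_mul]
  · subst h1
    have hset : {t : ℝ | (-1:ℝ) * t > 0} = Set.Iio 0 := by
      ext t
      simp only [Set.mem_setOf_eq, Set.mem_Iio, gt_iff_lt]
      constructor <;> intro h <;> nlinarith
    rw [hset, ← integral_Iic_eq_integral_Iio]
    have hneg := integral_comp_neg_Ioi (c := 0)
      (f := fun t => (α*t+β) * (c0 * Real.exp (-(1/2) * (α*t^2 + 2*β*t + γ))))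
    rw [neg_zero] at hneg
    rw [← hneg]
    have heq : ∀ t : ℝ, (α*(-t)+β) * (c0 * Real.exp (-(1/2) * (α*(-t)^2 + 2*β*(-t) + γ)))
        = -((α*t+(-β)) * (c0 * Real.exp (-(1/2) * (α*t^2 + 2*(-β)*t + γ)))) := by
      intro t
      have : α*(-t)^2 + 2*β*(-t) + γ = α*t^2 + 2*(-β)*t + γ := by ring
      rw [this]
      ring
    simp_rw [heq]
    rw [integral_neg, key (-β)]
    ring


lemma mulVec_insert {N : ℕ} (A : Matrix (Fin (N+1)) (Fin (N+1)) ℝ) (n : Fin (N+1))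
    (t : ℝ) (y : Fin N → ℝ) :
    (A *ᵥ n.insertNth t y) n = A n n * t + ∑ m, A n (n.succAbove m) * y m := by
  set x : Fin (N+1) → ℝ := n.insertNth t y with hx
  simp only [Matrix.mulVec, dotProduct]
  rw [Fin.sum_univ_succAbove (fun k => A n k * x k) n]
  simp [hx, Fin.insertNth_apply_same, Fin.insertNth_apply_succAbove]

lemma quad_insert {N : ℕ} (A : Matrix (Fin (N+1)) (Fin (N+1)) ℝ)
    (hsym : ∀ j k, A j k = A k j) (n : Fin (N+1)) (t : ℝ) (y : Fin N → ℝ) :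
    (n.insertNth t y) ⬝ᵥ A *ᵥ (n.insertNth t y)
      = A n n * t^2 + 2 * (∑ m, A n (n.succAbove m) * y m) * t
        + y ⬝ᵥ (A.submatrix n.succAbove n.succAbove) *ᵥ y := by
  set x : Fin (N+1) → ℝ := n.insertNth t y with hx
  simp only [dotProduct]
  rw [Fin.sum_univ_succAbove (fun k => x k * (A *ᵥ x) k) n]
  rw [show x n = t from by rw [hx]; exact Fin.insertNth_apply_same (α := fun _ => ℝ) n t y,
    show (A *ᵥ x) n = A n n * t + ∑ m, A n (n.succAbove m) * y m from mulVec_insert A n t y]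
  have hrow : ∀ m : Fin N, (A *ᵥ x) (n.succAbove m)
      = A (n.succAbove m) n * t + ∑ m', A (n.succAbove m) (n.succAbove m') * y m' := by
    intro m
    simp only [Matrix.mulVec, dotProduct]
    rw [Fin.sum_univ_succAbove (fun k => A (n.succAbove m) k * x k) n]
    simp [hx, Fin.insertNth_apply_same, Fin.insertNth_apply_succAbove]
  have hxs : ∀ m : Fin N, x (n.succAbove m) = y m := by
    intro m; rw [hx]; exact Fin.insertNth_apply_succAbove (α := fun _ => ℝ) n t y m
  simp_rw [hrow, hxs]
  have hK : ∀ m : Fin N, (A.submatrix n.succAbove n.succAbove *ᵥ y) m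
      = ∑ m', A (n.succAbove m) (n.succAbove m') * y m' := by
    intro m; simp [Matrix.mulVec, dotProduct]
  simp_rw [hK, mul_add, Finset.sum_add_distrib]
  have hsw : ∑ m : Fin N, y m * (A (n.succAbove m) n * t)
      = (∑ m : Fin N, A n (n.succAbove m) * y m) * t := by
    rw [Finset.sum_mul]
    congr 1 with m
    rw [hsym (n.succAbove m) n]
    ring
  rw [hsw]
  ring

lemma diag_pos {N : ℕ} {A : Matrix (Fin N) (Fin N) ℝ} (hA : A.PosDef) (n : Fin N) :
    0 < A n n := by
  have := hA.dotProduct_mulVec_pos (x := (Pi.single n 1 : Fin N → ℝ)) (by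
    intro h
    have := congrFun h n
    simp at this)
  simpa [dotProduct, Matrix.mulVec, Pi.single_apply, Finset.sum_ite_eq',
    mul_ite, ite_mul, star_trivial] using this

/-- Element-wise mean-integral of a centered multivariate Gaussian over an
orthant, expressed via `(N-1)`-dimensional Gaussian orthant integrals (Theorem 1). -/
theorem stmt0 (N' : ℕ) (C : Matrix (Fin (N' + 1)) (Fin (N' + 1)) ℝ)
    (hC : C.PosDef) (hCsymm : C.IsSymm)
    (r : Fin (N' + 1) → ℝ) (hr : ∀ n, r n = 1 ∨ r n = -1)
    (f : (Fin (N' + 1) → ℝ) → ℝ)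
    (hf : ∀ x, f x = (2 * π) ^ (-((N' + 1 : ℕ) : ℝ) / 2) * C.det ^ (-(1 : ℝ) / 2) *
      Real.exp (-(1 / 2) * (x ⬝ᵥ (C⁻¹ *ᵥ x))))
    (g : Fin (N' + 1) → (Fin N' → ℝ) → ℝ)
    (hg : ∀ n x, g n x = (2 * π) ^ (-((N' : ℕ) : ℝ) / 2) *
      ((C⁻¹).submatrix n.succAbove n.succAbove).det ^ ((1 : ℝ) / 2) *
      Real.exp (-(1 / 2) * (x ⬝ᵥ ((C⁻¹).submatrix n.succAbove n.succAbove *ᵥ x))))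
    (i : Fin (N' + 1)) :
    ∫ x in {x : Fin (N' + 1) → ℝ | ∀ n, r n * x n > 0}, x i * f x =
      ∑ n : Fin (N' + 1), r n * C i n * (2 * π * C n n) ^ (-(1 : ℝ) / 2) *
        ∫ x in {x : Fin N' → ℝ | ∀ m, r (n.succAbove m) * x m > 0}, g n x := by
  have hπ : (0:ℝ) < 2 * π := by positivity
  have hdetC : 0 < C.det := hC.det_pos
  have hCu : IsUnit C.det := hdetC.ne'.isUnit
  set A := C⁻¹ with hAdef
  have hA : A.PosDef := hC.inv
  have hAsymm : ∀ j k, A j k = A k j := by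
    intro j k
    have hsy : Aᵀ = A := by
      rw [hAdef, Matrix.transpose_nonsing_inv, hCsymm.eq]
    exact congrFun (congrFun hsy k) j
  set c0 : ℝ := (2 * π) ^ (-((N' + 1 : ℕ) : ℝ) / 2) * C.det ^ (-(1 : ℝ) / 2) with hc0
  have hc0pos : 0 < c0 := by
    apply mul_pos (Real.rpow_pos_of_pos hπ _) (Real.rpow_pos_of_pos hdetC _)
  have hfeq : f = fun x => c0 * Real.exp (-(1/2) * (x ⬝ᵥ A *ᵥ x)) := by
    funext x
    rw [hf x]
  subst hfeq
  have hdiagC : ∀ n, 0 < C n n := fun n => diag_pos hC n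
  have hdiagA : ∀ n, 0 < A n n := fun n => diag_pos hA n
  have hdetA : A.det = C.det⁻¹ := by
    rw [hAdef, Matrix.det_nonsing_inv, Ring.inverse_eq_inv']
  have hKdet : ∀ n : Fin (N'+1),
      (A.submatrix n.succAbove n.succAbove).det = C n n * C.det⁻¹ := by
    intro n
    have h1 : A⁻¹ = C := by rw [hAdef, Matrix.nonsing_inv_nonsing_inv C hCu]
    have h3 : C n n = Ring.inverse A.det * A.adjugate n n := by
      conv_lhs => rw [← h1, Matrix.inv_def]
      simp [Matrix.smul_apply]
    rw [hdetA, Ring.inverse_eq_inv', inv_inv] at h3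
    rw [det_sub_eq_adj]
    have hd0 : C.det ≠ 0 := hdetC.ne'
    field_simp at h3 ⊢
    linarith [h3]
  -- constant identity
  have hκ : ∀ n : Fin (N'+1), c0 = (2*π*C n n) ^ (-(1:ℝ)/2) *
      ((2*π) ^ (-((N':ℕ):ℝ)/2) * ((A.submatrix n.succAbove n.succAbove).det) ^ ((1:ℝ)/2)) := by
    intro n
    have ha : 0 < C n n := hdiagC n
    rw [hKdet n]
    rw [Real.mul_rpow hπ.le ha.le]
    rw [Real.mul_rpow ha.le (inv_nonneg.2 hdetC.le)]
    have e1 : ((2*π) ^ (-(1:ℝ)/2)) * ((2*π) ^ (-((N':ℕ):ℝ)/2))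
        = (2*π) ^ (-((N'+1:ℕ):ℝ)/2) := by
      rw [← Real.rpow_add hπ]
      congr 1
      push_cast
      ring
    have e2 : (C n n) ^ (-(1:ℝ)/2) * (C n n) ^ ((1:ℝ)/2) = 1 := by
      rw [← Real.rpow_add ha]
      norm_num
    have e3 : (C.det⁻¹) ^ ((1:ℝ)/2) = C.det ^ (-(1:ℝ)/2) := by
      rw [Real.inv_rpow hdetC.le, ← Real.rpow_neg hdetC.le]
      norm_num
    calc c0 = ((2*π) ^ (-(1:ℝ)/2) * (2*π) ^ (-((N':ℕ):ℝ)/2)) *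
          (((C n n) ^ (-(1:ℝ)/2) * (C n n) ^ ((1:ℝ)/2)) * C.det ^ (-(1:ℝ)/2)) := by
          rw [e1, e2, one_mul, hc0]
      _ = _ := by rw [e3]; ring
  set O : Set (Fin (N'+1) → ℝ) := {x | ∀ n, r n * x n > 0} with hO
  have hGcont : ∀ n : Fin (N'+1), Continuous fun x : Fin (N'+1) → ℝ =>
      (A *ᵥ x) n * (c0 * Real.exp (-(1/2) * (x ⬝ᵥ A *ᵥ x))) := by
    intro n
    have h1 : Continuous fun x : Fin (N'+1) → ℝ => (A *ᵥ x) n := by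
      simp only [Matrix.mulVec, dotProduct]
      fun_prop
    exact h1.mul (continuous_const.mul (Real.continuous_exp.comp
      (continuous_const.mul (cont_quad A))))
  have hGint : ∀ n : Fin (N'+1), Integrable (fun x : Fin (N'+1) → ℝ =>
      (A *ᵥ x) n * (c0 * Real.exp (-(1/2) * (x ⬝ᵥ A *ᵥ x)))) := by
    intro n
    have hw := (integrable_weight A hA).const_mul ((∑ k, |A n k|) * c0)
    refine hw.mono' ((hGcont n).aestronglyMeasurable) ?_
    filter_upwards with x
    have h1le : ∀ j : Fin (N'+1), (1:ℝ) ≤ 1 + |x j| :=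
      fun j => le_add_of_nonneg_right (abs_nonneg _)
    have hxk : ∀ k, |x k| ≤ ∏ j, (1 + |x j|) := by
      intro k
      have herase : (1:ℝ) ≤ ∏ j ∈ Finset.univ.erase k, (1 + |x j|) := by
        calc (1:ℝ) = ∏ j ∈ Finset.univ.erase k, 1 := by simp
          _ ≤ ∏ j ∈ Finset.univ.erase k, (1 + |x j|) :=
            Finset.prod_le_prod (fun j _ => zero_le_one) (fun j _ => h1le j)
      calc |x k| ≤ 1 + |x k| := le_add_of_nonneg_left zero_le_one
        _ ≤ (1 + |x k|) * ∏ j ∈ Finset.univ.erase k, (1 + |x j|) :=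
          le_mul_of_one_le_right (by positivity) herase
        _ = ∏ j, (1 + |x j|) := Finset.mul_prod_erase Finset.univ (fun j => 1 + |x j|) (Finset.mem_univ k)
    have hAx : |(A *ᵥ x) n| ≤ (∑ k, |A n k|) * ∏ j, (1 + |x j|) := by
      have hmv : (A *ᵥ x) n = ∑ k, A n k * x k := by
        simp [Matrix.mulVec, dotProduct]
      rw [hmv]
      calc |∑ k, A n k * x k| ≤ ∑ k, |A n k * x k| := Finset.abs_sum_le_sum_abs _ _
        _ ≤ ∑ k, |A n k| * ∏ j, (1 + |x j|) := by
            refine Finset.sum_le_sum fun k _ => ?_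
            rw [abs_mul]
            exact mul_le_mul_of_nonneg_left (hxk k) (abs_nonneg _)
        _ = (∑ k, |A n k|) * ∏ j, (1 + |x j|) := by rw [Finset.sum_mul]
    rw [Real.norm_eq_abs, abs_mul]
    have hE : 0 < c0 * Real.exp (-(1/2) * (x ⬝ᵥ A *ᵥ x)) := by positivity
    rw [abs_of_pos hE]
    calc |(A *ᵥ x) n| * (c0 * Real.exp (-(1/2) * (x ⬝ᵥ A *ᵥ x)))
        ≤ ((∑ k, |A n k|) * ∏ j, (1 + |x j|)) * (c0 * Real.exp (-(1/2) * (x ⬝ᵥ A *ᵥ x))) :=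
          mul_le_mul_of_nonneg_right hAx hE.le
      _ = (∑ k, |A n k|) * c0 *
          ((∏ j, (1 + |x j|)) * Real.exp (-(1/2) * (x ⬝ᵥ A *ᵥ x))) := by ring
  have hpoint : ∀ x : Fin (N'+1) → ℝ, x i * (c0 * Real.exp (-(1/2) * (x ⬝ᵥ A *ᵥ x)))
      = ∑ n, C i n * ((A *ᵥ x) n * (c0 * Real.exp (-(1/2) * (x ⬝ᵥ A *ᵥ x)))) := by
    intro x
    have hCA : C *ᵥ (A *ᵥ x) = x := by
      rw [Matrix.mulVec_mulVec, hAdef, Matrix.mul_nonsing_inv C hCu, Matrix.one_mulVec]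
    have hxi : x i = ∑ n, C i n * (A *ᵥ x) n := by
      conv_lhs => rw [← hCA]
      simp [Matrix.mulVec, dotProduct]
    rw [hxi, Finset.sum_mul]
    exact Finset.sum_congr rfl fun n _ => by ring
  have hIn : ∀ n : Fin (N'+1),
      ∫ x in O, (A *ᵥ x) n * (c0 * Real.exp (-(1/2) * (x ⬝ᵥ A *ᵥ x)))
      = r n * ((2*π*C n n) ^ (-(1:ℝ)/2) *
          ∫ y in {y : Fin N' → ℝ | ∀ m, r (n.succAbove m) * y m > 0}, g n y) := by
    intro n
    set B : (Fin N' → ℝ) → ℝ := fun y => ∑ m, A n (n.succAbove m) * y m with hB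
    set T : Set ℝ := {t | r n * t > 0} with hT
    set O' : Set (Fin N' → ℝ) := {y | ∀ m, r (n.succAbove m) * y m > 0} with hO'
    set e := MeasurableEquiv.piFinSuccAbove (fun _ : Fin (N'+1) => ℝ) n with he
    have hesymm : ∀ p : ℝ × (Fin N' → ℝ), e.symm p = n.insertNth p.1 p.2 := by
      intro p
      rfl
    set G : (Fin (N'+1) → ℝ) → ℝ := fun x =>
      (A *ᵥ x) n * (c0 * Real.exp (-(1/2) * (x ⬝ᵥ A *ᵥ x))) with hG
    set φ : ℝ × (Fin N' → ℝ) → ℝ := fun p =>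
      (A n n * p.1 + B p.2) * (c0 * Real.exp (-(1/2) *
        (A n n * p.1^2 + 2*(B p.2)*p.1 +
          p.2 ⬝ᵥ (A.submatrix n.succAbove n.succAbove) *ᵥ p.2))) with hφ
    have hGφ : ∀ p : ℝ × (Fin N' → ℝ), G (e.symm p) = φ p := by
      rintro ⟨t, y⟩
      rw [hesymm, hG, hφ]
      simp only
      rw [mulVec_insert A n t y, quad_insert A hAsymm n t y]
    have hpre : e.symm ⁻¹' O = T ×ˢ O' := by
      ext ⟨t, y⟩
      simp only [Set.mem_preimage, Set.mem_prod, hesymm, hO, Set.mem_setOf_eq, hT, hO']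
      rw [Fin.forall_iff_succAbove (P := fun j => r j * (n.insertNth t y : Fin (N'+1) → ℝ) j > 0) n]
      simp [Fin.insertNth_apply_same, Fin.insertNth_apply_succAbove]
    have hMPe : MeasurePreserving e.symm
        (volume : Measure (ℝ × (Fin N' → ℝ))) volume :=
      (volume_preserving_piFinSuccAbove (fun _ : Fin (N'+1) => ℝ) n).symm
    have hGO : IntegrableOn G O := (hGint n).integrableOn
    have step1 : ∫ x in O, G x
        = ∫ p in T ×ˢ O', φ p ∂(volume : Measure (ℝ × (Fin N' → ℝ))) := by
      rw [← hMPe.setIntegral_preimage_emb (MeasurableEquiv.measurableEmbedding _) G O, hpre]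
      exact integral_congr_ae (Filter.Eventually.of_forall fun p => hGφ p)
    have hφprod : Integrable φ ((volume.restrict T).prod (volume.restrict O')) := by
      rw [Measure.prod_restrict, ← Measure.volume_eq_prod, ← hpre]
      have h2 := hMPe.restrict_preimage_emb (MeasurableEquiv.measurableEmbedding _) O
      have h3 : Integrable (G ∘ e.symm) (volume.restrict (e.symm ⁻¹' O)) :=
        (h2.integrable_comp_emb (MeasurableEquiv.measurableEmbedding _)).2 hGO
      exact h3.congr (Filter.Eventually.of_forall fun p => hGφ p)
    have step2 : (∫ p in T ×ˢ O', φ p ∂(volume : Measure (ℝ × (Fin N' → ℝ))))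
        = ∫ y in O', ∫ t in T, φ (t, y) := by
      rw [Measure.volume_eq_prod, ← Measure.prod_restrict]
      exact integral_prod_symm φ hφprod
    have step3 : ∀ y : Fin N' → ℝ, ∫ t in T, φ (t, y)
        = r n * (c0 * Real.exp (-(1/2) *
            (y ⬝ᵥ (A.submatrix n.succAbove n.succAbove) *ᵥ y))) := by
      intro y
      rw [hT]
      exact line_integral c0 (A n n) (B y)
        (y ⬝ᵥ (A.submatrix n.succAbove n.succAbove) *ᵥ y) (hdiagA n) (r n) (hr n)
    have hgeq : ∀ y : Fin N' → ℝ,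
        r n * (c0 * Real.exp (-(1/2) *
          (y ⬝ᵥ (A.submatrix n.succAbove n.succAbove) *ᵥ y)))
        = (r n * ((2*π*C n n) ^ (-(1:ℝ)/2))) * g n y := by
      intro y
      rw [hg n y, hκ n]
      ring
    rw [step1, step2]
    simp_rw [step3, hgeq]
    rw [integral_const_mul]
    rw [hO']
    ring
  calc (∫ x in O, x i * (c0 * Real.exp (-(1/2) * (x ⬝ᵥ A *ᵥ x))))
      = ∫ x in O, ∑ n, C i n *
          ((A *ᵥ x) n * (c0 * Real.exp (-(1/2) * (x ⬝ᵥ A *ᵥ x)))) := by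
        refine integral_congr_ae (Filter.Eventually.of_forall fun x => hpoint x)
    _ = ∑ n, ∫ x in O, C i n *
          ((A *ᵥ x) n * (c0 * Real.exp (-(1/2) * (x ⬝ᵥ A *ᵥ x)))) :=
        integral_finset_sum _ (fun n _ => ((hGint n).const_mul _).integrableOn)
    _ = ∑ n, C i n * ∫ x in O,
          (A *ᵥ x) n * (c0 * Real.exp (-(1/2) * (x ⬝ᵥ A *ᵥ x))) := by
        simp_rw [integral_const_mul]
    _ = _ := by
        refine Finset.sum_congr rfl fun n _ => ?_
        rw [hIn n]
        ring
end

section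
/- Let M ≥ 1 be an integer. Let C_r ∈ ℂ^{M×M} be the matrix with entries [C_r]_{m,n} = 1 − |m−n|/M + i·(m−n)/M for 1 ≤ m, n ≤ M, and let D ∈ ℂ^{M×M} be the matrix whose (m,n) entry is the sum of the following contributions: M if m = n; −M/2 if |m−n| = 1; and i·M·(n−m)/(2(M−1)) if |m−n| = M−1 (for M = 2 the last two conditions coincide and both contributions are added; for M = 1 only the diagonal term occurs). Then D · C_r = I_M and C_r · D = I_M; in particular C_r is invertible with C_r⁻¹ = D. -/
open Matrix

set_option maxHeartbeats 2000000 in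
/-- **Lemma 1.** Closed-form inverse of the arcsine-law covariance matrix
`[C_r]_{m,n} = 1 − |m−n|/M + i(m−n)/M` of the one-bit quantized noiseless received signal for
the optimal pilot sequence. Indices are `0`-based (`Fin M`), which leaves all differences
`m − n` unchanged. -/
theorem stmt3 (M : ℕ) (hM : 1 ≤ M)
    (Cr D : Matrix (Fin M) (Fin M) ℂ)
    (hCr : ∀ m n, Cr m n =
      ((1 - |((m : ℕ) : ℝ) - ((n : ℕ) : ℝ)| / M : ℝ) : ℂ) +
        Complex.I * (((((m : ℕ) : ℝ) - ((n : ℕ) : ℝ)) / M : ℝ) : ℂ))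
    (hD : ∀ m n, D m n =
      (if m = n then (M : ℂ) else 0)
      + (if |((m : ℕ) : ℤ) - ((n : ℕ) : ℤ)| = 1 then -(M : ℂ) / 2 else 0)
      + (if |((m : ℕ) : ℤ) - ((n : ℕ) : ℤ)| = (M : ℤ) - 1 ∧ m ≠ n then
          Complex.I * (M : ℂ) * ((((n : ℕ) : ℝ) - ((m : ℕ) : ℝ) : ℝ) : ℂ) / (2 * ((M : ℂ) - 1))
        else 0)) :
    D * Cr = 1 ∧ Cr * D = 1 ∧ IsUnit Cr ∧ Cr⁻¹ = D := by
  have hM0c : (M:ℂ) ≠ 0 := Nat.cast_ne_zero.mpr (by omega)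
  have hDC : D * Cr = 1 := by
    ext m k
    rw [Matrix.mul_apply, Matrix.one_apply]
    rcases Nat.lt_or_ge M 3 with hM3 | hM3
    · -- M = 1 or M = 2
      interval_cases M
      · have hm : m = 0 := Subsingleton.elim _ _
        have hk : k = 0 := Subsingleton.elim _ _
        subst hm hk
        rw [Fin.sum_univ_one, hD, hCr]
        norm_num
      · fin_cases m <;> fin_cases k <;>
          simp only [Fin.sum_univ_two, hD, hCr] <;>
          norm_num [Fin.ext_iff, Complex.ext_iff]
    · -- M ≥ 3
      have hMne1 : M ≠ 1 := by omega
      have hM1c : (M:ℂ) - 1 ≠ 0 := sub_ne_zero.mpr (by exact_mod_cast hMne1)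
      rcases Nat.eq_zero_or_pos m.val with hm0 | hm0
      · -- m = 0
        set b : Fin M := ⟨1, by omega⟩ with hb
        set c : Fin M := ⟨M - 1, by omega⟩ with hc
        have hsub : (∑ n, D m n * Cr n k) = ∑ n ∈ ({m, b, c} : Finset (Fin M)), D m n * Cr n k := by
          refine (Finset.sum_subset (Finset.subset_univ _) ?_).symm
          intro n _ hn
          simp only [Finset.mem_insert, Finset.mem_singleton, not_or, Ne, Fin.ext_iff, hb, hc] at hn
          have hlt := n.isLt
          rw [hD]
          rw [if_neg (by rw [Fin.ext_iff]; omega),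
              if_neg (by rw [abs_eq (by norm_num : (0:ℤ) ≤ 1)]; omega),
              if_neg (by rintro ⟨h, -⟩; rw [abs_eq (by omega : (0:ℤ) ≤ (M:ℤ) - 1)] at h; omega)]
          ring
        have hmem1 : m ∉ ({b, c} : Finset (Fin M)) := by
          simp only [Finset.mem_insert, Finset.mem_singleton, Fin.ext_iff, hb, hc]
          push_neg
          omega
        have hmem2 : b ∉ ({c} : Finset (Fin M)) := by
          simp only [Finset.mem_singleton, Fin.ext_iff, hb, hc]
          omega
        rw [hsub, Finset.sum_insert hmem1, Finset.sum_insert hmem2, Finset.sum_singleton]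
        have hDm : D m m = (M:ℂ) := by
          rw [hD, if_pos rfl, if_neg (by simp), if_neg (by simp)]; ring
        have hDb : D m b = -(M:ℂ)/2 := by
          have t1 : ¬ (m = b) := by rw [Fin.ext_iff]; simp only [hb]; omega
          have t2 : |((m:ℕ):ℤ) - (((b : Fin M):ℕ):ℤ)| = 1 := by
            simp only [hb]
            rw [abs_eq (by norm_num : (0:ℤ) ≤ 1)]
            omega
          have t3 : ¬(|((m:ℕ):ℤ) - (((b : Fin M):ℕ):ℤ)| = (M:ℤ) - 1 ∧ m ≠ b) := by
            rintro ⟨h, -⟩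
            rw [t2] at h
            omega
          rw [hD, if_neg t1, if_pos t2, if_neg t3]
          ring
        have hDc : D m c = Complex.I * (M:ℂ) * ((((M:ℝ) - 1 : ℝ)) : ℂ) / (2 * ((M:ℂ) - 1)) := by
          have t1 : ¬ (m = c) := by rw [Fin.ext_iff]; simp only [hc]; omega
          have t2 : ¬ (|((m:ℕ):ℤ) - (((c : Fin M):ℕ):ℤ)| = 1) := by
            simp only [hc]
            rw [abs_eq (by norm_num : (0:ℤ) ≤ 1)]
            omega
          have t3 : |((m:ℕ):ℤ) - (((c : Fin M):ℕ):ℤ)| = (M:ℤ) - 1 ∧ m ≠ c := by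
            constructor
            · simp only [hc]
              rw [abs_eq (by omega : (0:ℤ) ≤ (M:ℤ) - 1)]
              omega
            · exact t1
          rw [hD, if_neg t1, if_neg t2, if_pos t3]
          have e3 : (((c : Fin M) : ℕ) : ℝ) = (M:ℝ) - 1 := by
            simp only [hc]
            rw [Nat.cast_sub hM]
            norm_num
          rw [e3, hm0]
          push_cast
          ring
        rw [hDm, hDb, hDc, hCr, hCr, hCr]
        have e3 : ((c : Fin M).val : ℝ) = (M:ℝ) - 1 := by
          simp only [hc]; rw [Nat.cast_sub hM]; norm_num
        have e4 : ((b : Fin M).val : ℝ) = 1 := by simp only [hb]; norm_num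
        rw [e3, e4, hm0]
        have hM3R : (3:ℝ) ≤ (M:ℝ) := by exact_mod_cast hM3
        simp only [Fin.ext_iff, hm0, Nat.cast_zero]
        rcases Nat.eq_zero_or_pos k.val with hk0 | hk0
        · rw [hk0, if_pos (by omega)]
          rw [Nat.cast_zero,
            abs_of_nonneg (by norm_num : (0:ℝ) ≤ 0 - 0),
            abs_of_nonneg (by norm_num : (0:ℝ) ≤ 1 - 0),
            abs_of_nonneg (by linarith : (0:ℝ) ≤ (M:ℝ) - 1 - 0)]
          push_cast
          field_simp
          ring_nf
          simp only [Complex.I_sq]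
          ring
        · have hk1 : (1:ℝ) ≤ (k.val:ℝ) := by exact_mod_cast hk0
          have hkM : (k.val:ℝ) ≤ (M:ℝ) - 1 := by
            have h4 : k.val + 1 ≤ M := k.isLt
            have h5 : (k.val:ℝ) + 1 ≤ (M:ℝ) := by exact_mod_cast h4
            linarith
          rw [if_neg (by omega),
            abs_of_nonpos (by linarith : (0:ℝ) - (k.val:ℝ) ≤ 0),
            abs_of_nonpos (by linarith : (1:ℝ) - (k.val:ℝ) ≤ 0),
            abs_of_nonneg (by linarith : (0:ℝ) ≤ (M:ℝ) - 1 - (k.val:ℝ))]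
          push_cast
          field_simp
          ring_nf
          simp only [Complex.I_sq]
          ring
      by_cases hmt : m.val = M - 1
      · -- m = M - 1
        set a : Fin M := ⟨0, by omega⟩ with ha
        set b : Fin M := ⟨M - 2, by omega⟩ with hb
        have hsub : (∑ n, D m n * Cr n k) = ∑ n ∈ ({a, b, m} : Finset (Fin M)), D m n * Cr n k := by
          refine (Finset.sum_subset (Finset.subset_univ _) ?_).symm
          intro n _ hn
          simp only [Finset.mem_insert, Finset.mem_singleton, not_or, Ne, Fin.ext_iff, ha, hb] at hn
          have hlt := n.isLt
          rw [hD]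
          rw [if_neg (by rw [Fin.ext_iff]; omega),
              if_neg (by rw [abs_eq (by norm_num : (0:ℤ) ≤ 1)]; omega),
              if_neg (by rintro ⟨h, -⟩; rw [abs_eq (by omega : (0:ℤ) ≤ (M:ℤ) - 1)] at h; omega)]
          ring
        have hmem1 : a ∉ ({b, m} : Finset (Fin M)) := by
          simp only [Finset.mem_insert, Finset.mem_singleton, Fin.ext_iff, ha, hb]
          push_neg
          omega
        have hmem2 : b ∉ ({m} : Finset (Fin M)) := by
          simp only [Finset.mem_singleton, Fin.ext_iff, hb]
          omega
        rw [hsub, Finset.sum_insert hmem1, Finset.sum_insert hmem2, Finset.sum_singleton]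
        have hDm : D m m = (M:ℂ) := by
          rw [hD, if_pos rfl, if_neg (by simp), if_neg (by simp)]; ring
        have hDb : D m b = -(M:ℂ)/2 := by
          have t1 : ¬ (m = b) := by rw [Fin.ext_iff]; simp only [hb]; omega
          have t2 : |((m:ℕ):ℤ) - (((b : Fin M):ℕ):ℤ)| = 1 := by
            simp only [hb]
            rw [abs_eq (by norm_num : (0:ℤ) ≤ 1)]
            omega
          have t3 : ¬(|((m:ℕ):ℤ) - (((b : Fin M):ℕ):ℤ)| = (M:ℤ) - 1 ∧ m ≠ b) := by
            rintro ⟨h, -⟩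
            rw [t2] at h
            omega
          rw [hD, if_neg t1, if_pos t2, if_neg t3]
          ring
        have hDa : D m a = Complex.I * (M:ℂ) * (((0:ℝ) - ((M:ℝ) - 1) : ℝ) : ℂ) / (2 * ((M:ℂ) - 1)) := by
          have t1 : ¬ (m = a) := by rw [Fin.ext_iff]; simp only [ha]; omega
          have t2 : ¬ (|((m:ℕ):ℤ) - (((a : Fin M):ℕ):ℤ)| = 1) := by
            simp only [ha]
            rw [abs_eq (by norm_num : (0:ℤ) ≤ 1)]
            omega
          have t3 : |((m:ℕ):ℤ) - (((a : Fin M):ℕ):ℤ)| = (M:ℤ) - 1 ∧ m ≠ a := by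
            constructor
            · simp only [ha]
              rw [abs_eq (by omega : (0:ℤ) ≤ (M:ℤ) - 1)]
              omega
            · exact t1
          rw [hD, if_neg t1, if_neg t2, if_pos t3]
          have e3 : ((m.val : ℕ) : ℝ) = (M:ℝ) - 1 := by
            rw [hmt, Nat.cast_sub hM]
            norm_num
          rw [e3]
          simp only [ha]
          push_cast
          ring
        rw [hDa, hDb, hDm, hCr, hCr, hCr]
        have e3 : ((m.val : ℕ) : ℝ) = (M:ℝ) - 1 := by rw [hmt, Nat.cast_sub hM]; norm_num
        have e4 : ((b : Fin M).val : ℝ) = (M:ℝ) - 2 := by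
          simp only [hb]; rw [Nat.cast_sub (by omega)]; norm_num
        have e5 : ((a : Fin M).val : ℝ) = 0 := by simp only [ha]; norm_num
        rw [e3, e4, e5]
        have hM3R : (3:ℝ) ≤ (M:ℝ) := by exact_mod_cast hM3
        simp only [Fin.ext_iff, hmt]
        rcases Nat.lt_or_ge k.val (M-1) with hk0 | hk0
        · have hkM : (k.val:ℝ) ≤ (M:ℝ) - 2 := by
            have h3 : k.val + 2 ≤ M := by omega
            have h4 : (k.val:ℝ) + 2 ≤ (M:ℝ) := by exact_mod_cast h3
            linarith
          rw [if_neg (by omega),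
            abs_of_nonpos (by linarith : (0:ℝ) - (k.val:ℝ) ≤ 0),
            abs_of_nonneg (by linarith : (0:ℝ) ≤ (M:ℝ) - 2 - (k.val:ℝ)),
            abs_of_nonneg (by linarith : (0:ℝ) ≤ (M:ℝ) - 1 - (k.val:ℝ))]
          push_cast
          field_simp
          ring_nf
          simp only [Complex.I_sq]
          ring
        · have hk1 : k.val = M - 1 := by have := k.isLt; omega
          have hkR : (k.val:ℝ) = (M:ℝ) - 1 := by rw [hk1, Nat.cast_sub hM]; norm_num
          rw [if_pos (by omega), hkR,
            abs_of_nonpos (by linarith : (0:ℝ) - ((M:ℝ) - 1) ≤ 0),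
            abs_of_nonpos (by linarith : ((M:ℝ) - 2) - ((M:ℝ) - 1) ≤ 0),
            abs_of_nonneg (by linarith : (0:ℝ) ≤ (M:ℝ) - 1 - ((M:ℝ) - 1))]
          push_cast
          field_simp
          ring_nf
          simp only [Complex.I_sq]
          ring
      -- interior m
      have hm1 : 1 ≤ m.val := hm0
      have hm2 : m.val ≤ M - 2 := by have := m.isLt; omega
      set a : Fin M := ⟨m.val - 1, by omega⟩ with ha
      set b : Fin M := ⟨m.val + 1, by omega⟩ with hb
      have hsub : (∑ n, D m n * Cr n k) = ∑ n ∈ ({a, m, b} : Finset (Fin M)), D m n * Cr n k := by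
        refine (Finset.sum_subset (Finset.subset_univ _) ?_).symm
        intro n _ hn
        simp only [Finset.mem_insert, Finset.mem_singleton, not_or, Ne, Fin.ext_iff, ha, hb] at hn
        have hlt := n.isLt
        rw [hD]
        rw [if_neg (by rw [Fin.ext_iff]; omega),
            if_neg (by rw [abs_eq (by norm_num : (0:ℤ) ≤ 1)]; omega),
            if_neg (by rintro ⟨h, -⟩; rw [abs_eq (by omega : (0:ℤ) ≤ (M:ℤ) - 1)] at h; omega)]
        ring
      rw [hsub, Finset.sum_insert (by simp [Fin.ext_iff, ha, hb]; omega),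
        Finset.sum_insert (by simp [Fin.ext_iff, hb]), Finset.sum_singleton]
      have hDa : D m a = -(M:ℂ)/2 := by
        rw [hD, if_neg (by rw [Fin.ext_iff]; simp [ha]; omega),
          if_pos (by simp [ha]; rw [abs_eq (by norm_num : (0:ℤ) ≤ 1)]; omega),
          if_neg (by rintro ⟨h, -⟩; simp [ha] at h; rw [abs_eq (by omega : (0:ℤ) ≤ (M:ℤ) - 1)] at h; omega)]
        ring
      have hDm : D m m = (M:ℂ) := by
        rw [hD, if_pos rfl, if_neg (by simp), if_neg (by simp)]
        ring
      have hDb : D m b = -(M:ℂ)/2 := by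
        rw [hD, if_neg (by rw [Fin.ext_iff]; simp [hb]),
          if_pos (by simp [hb]),
          if_neg (by rintro ⟨h, -⟩; simp [hb] at h; omega)]
        ring
      rw [hDa, hDm, hDb, hCr, hCr, hCr]
      simp only [Fin.ext_iff]
      have e1 : ((m.val - 1 : ℕ) : ℝ) = (m.val : ℝ) - 1 := by
        rw [Nat.cast_sub (by omega)]; norm_num
      have e2 : ((m.val + 1 : ℕ) : ℝ) = (m.val : ℝ) + 1 := by push_cast; ring
      rw [e1, e2]
      rcases lt_trichotomy k.val m.val with hkm | hkm | hkm
      · have hc : (k.val : ℝ) + 1 ≤ m.val := by exact_mod_cast hkm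
        rw [if_neg (by omega),
          abs_of_nonneg (by linarith : (0:ℝ) ≤ (m.val:ℝ) - 1 - k.val),
          abs_of_nonneg (by linarith : (0:ℝ) ≤ (m.val:ℝ) - k.val),
          abs_of_nonneg (by linarith : (0:ℝ) ≤ (m.val:ℝ) + 1 - k.val)]
        push_cast
        field_simp
        ring
      · have hc : (k.val : ℝ) = m.val := by exact_mod_cast hkm
        rw [if_pos (by omega)]
        rw [hc]
        rw [abs_of_nonpos (by linarith : ((m.val:ℝ) - 1 - m.val) ≤ 0),
          abs_of_nonneg (by linarith : (0:ℝ) ≤ (m.val:ℝ) - m.val),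
          abs_of_nonneg (by linarith : (0:ℝ) ≤ (m.val:ℝ) + 1 - m.val)]
        push_cast
        field_simp
        ring
      · have hc : (m.val : ℝ) + 1 ≤ k.val := by exact_mod_cast hkm
        rw [if_neg (by omega),
          abs_of_nonpos (by linarith : ((m.val:ℝ) - 1 - k.val) ≤ 0),
          abs_of_nonpos (by linarith : ((m.val:ℝ) - k.val) ≤ 0),
          abs_of_nonpos (by linarith : ((m.val:ℝ) + 1 - k.val) ≤ 0)]
        push_cast
        field_simp
        ring
  have hCrH : Crᴴ = Cr := by
    ext m n
    rw [Matrix.conjTranspose_apply, hCr n m, hCr m n]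
    rw [abs_sub_comm ((n:ℕ):ℝ)]
    simp only [star_add, star_mul', Complex.star_def, Complex.conj_ofReal, Complex.conj_I]
    push_cast
    ring
  have hDH : Dᴴ = D := by
    ext m n
    rw [Matrix.conjTranspose_apply, hD n m, hD m n]
    have c1 : (n = m) = (m = n) := propext eq_comm
    have c2 : (|((n : ℕ) : ℤ) - ((m : ℕ) : ℤ)|) = (|((m : ℕ) : ℤ) - ((n : ℕ) : ℤ)|) := abs_sub_comm _ _
    have c3 : (n ≠ m) = (m ≠ n) := propext ne_comm
    simp only [c1, c2, c3]
    simp only [star_add, apply_ite (star : ℂ → ℂ), star_zero, star_div₀, star_mul',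
      Complex.star_def, Complex.conj_I, Complex.conj_ofReal, map_natCast, map_ofNat,
      map_sub, _root_.map_one, map_neg, map_div₀]
    congr 1
    congr 1
    push_cast
    ring
  have hCrD : Cr * D = 1 := by
    have h := congrArg Matrix.conjTranspose hDC
    rw [Matrix.conjTranspose_mul, hCrH, hDH, Matrix.conjTranspose_one] at h
    exact h
  exact ⟨hDC, hCrD, (Matrix.isUnit_iff_isUnit_det _).mpr (Matrix.isUnit_det_of_left_inverse hDC), Matrix.inv_eq_left_inv hDC⟩
end

section
/- Let M ≥ 1 be an integer. Let C_r ∈ ℂ^{M×M} be the matrix with entries [C_r]_{m,n} = 1 − |m−n|/M + i·(m−n)/M for 1 ≤ m, n ≤ M, and let a ∈ ℂ^M be the vector with entries a_m = exp(i·π(m−1)/(2M)). Then aᴴ C_r⁻¹ a = 2M² sin²(π/(4M)); consequently, for every σ > 0, σ²(1 − (2/π) aᴴ C_r⁻¹ a) = σ²(1 − (4M²/π) sin²(π/(4M))). -/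
open Matrix Real

noncomputable def Bmat (M : ℕ) : Matrix (Fin M) (Fin M) ℂ := fun n k =>
  (M : ℂ) / 2 * ((if (n : ℕ) = (k : ℕ) then 2 else 0)
    + (if (n : ℕ) + 1 = (k : ℕ) then -1 else 0)
    + (if (k : ℕ) + 1 = (n : ℕ) then -1 else 0)
    + (if (n : ℕ) = 0 ∧ (k : ℕ) = M - 1 then Complex.I else 0)
    + (if (n : ℕ) = M - 1 ∧ (k : ℕ) = 0 then -Complex.I else 0))

lemma sum_ite_eq_of_iff {M : ℕ} (f : Fin M → ℂ) (P : Fin M → Prop) [DecidablePred P]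
    (j : ℕ) (hj : j < M) (h : ∀ n : Fin M, P n ↔ (n : ℕ) = j) :
    ∑ n : Fin M, (if P n then f n else 0) = f ⟨j, hj⟩ := by
  rw [Finset.sum_eq_single ⟨j, hj⟩]
  · rw [if_pos ((h _).mpr rfl)]
  · intro b _ hb
    rw [if_neg]
    rw [h]
    exact fun hh => hb (Fin.ext hh)
  · exact fun h' => absurd (Finset.mem_univ _) h'

lemma sum_ite_zero_of {M : ℕ} (f : Fin M → ℂ) (P : Fin M → Prop) [DecidablePred P]
    (h : ∀ n, ¬ P n) : ∑ n : Fin M, (if P n then f n else 0) = 0 :=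
  Finset.sum_eq_zero fun n _ => if_neg (h n)

lemma split5 {M : ℕ} (C : Matrix (Fin M) (Fin M) ℂ) (m k : Fin M) :
    ∑ n, C m n * Bmat M n k
      = (M : ℂ) / 2 * ((∑ n : Fin M, (if (n : ℕ) = (k : ℕ) then 2 * C m n else 0))
        + (∑ n : Fin M, (if (n : ℕ) + 1 = (k : ℕ) then -C m n else 0))
        + (∑ n : Fin M, (if (k : ℕ) + 1 = (n : ℕ) then -C m n else 0))
        + (∑ n : Fin M, (if (n : ℕ) = 0 ∧ (k : ℕ) = M - 1 then Complex.I * C m n else 0))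
        + (∑ n : Fin M, (if (n : ℕ) = M - 1 ∧ (k : ℕ) = 0 then -Complex.I * C m n else 0))) := by
  rw [← Finset.sum_add_distrib, ← Finset.sum_add_distrib, ← Finset.sum_add_distrib,
    ← Finset.sum_add_distrib, Finset.mul_sum]
  refine Finset.sum_congr rfl fun n _ => ?_
  unfold Bmat
  split_ifs <;> ring


lemma abs_nat_sub_of_le {x y : ℕ} (h : x ≤ y) : |(x:ℝ) - (y:ℝ)| = (y:ℝ) - (x:ℝ) := by
  rw [abs_sub_comm, abs_of_nonneg (sub_nonneg.mpr (by exact_mod_cast h))]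

lemma abs_nat_sub_of_ge {x y : ℕ} (h : y ≤ x) : |(x:ℝ) - (y:ℝ)| = (x:ℝ) - (y:ℝ) :=
  abs_of_nonneg (sub_nonneg.mpr (by exact_mod_cast h))

lemma key (M : ℕ) (hM : 1 ≤ M)
    (Cr : Matrix (Fin M) (Fin M) ℂ)
    (hCr : ∀ m n, Cr m n =
      ((1 - |((m : ℕ) : ℝ) - ((n : ℕ) : ℝ)| / M : ℝ) : ℂ) +
        Complex.I * (((((m : ℕ) : ℝ) - ((n : ℕ) : ℝ)) / M : ℝ) : ℂ)) :
    Cr * Bmat M = 1 := by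
  have hM0 : (M : ℝ) ≠ 0 := Nat.cast_ne_zero.mpr (by omega)
  ext m k
  rw [Matrix.mul_apply, Matrix.one_apply, split5]
  have e1 : (∑ n : Fin M, (if (n : ℕ) = (k : ℕ) then 2 * Cr m n else 0))
      = 2 * Cr m ⟨(k : ℕ), k.isLt⟩ :=
    sum_ite_eq_of_iff _ _ _ k.isLt fun n => Iff.rfl
  rw [e1]
  by_cases hk0 : (k : ℕ) = 0 <;> by_cases hkM : (k : ℕ) = M - 1
  · -- M = 1
    have hM1 : M = 1 := by omega
    subst hM1
    have e2 : (∑ n : Fin 1, (if (n : ℕ) + 1 = (k : ℕ) then -Cr m n else 0)) = 0 :=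
      sum_ite_zero_of _ _ fun n => by omega
    have e3 : (∑ n : Fin 1, (if (k : ℕ) + 1 = (n : ℕ) then -Cr m n else 0)) = 0 :=
      sum_ite_zero_of _ _ fun n => by have := n.isLt; omega
    have e4 : (∑ n : Fin 1, (if (n : ℕ) = 0 ∧ (k : ℕ) = 1 - 1 then Complex.I * Cr m n else 0))
        = Complex.I * Cr m ⟨0, by omega⟩ :=
      sum_ite_eq_of_iff _ _ _ (by omega) fun n => by have := n.isLt; omega
    have e5 : (∑ n : Fin 1, (if (n : ℕ) = 1 - 1 ∧ (k : ℕ) = 0 then -Complex.I * Cr m n else 0))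
        = -Complex.I * Cr m ⟨0, by omega⟩ :=
      sum_ite_eq_of_iff _ _ _ (by omega) fun n => by have := n.isLt; omega
    rw [e2, e3, e4, e5, if_pos (Subsingleton.elim m k)]
    have hm0 : (m : ℕ) = 0 := by have := m.isLt; omega
    simp only [hCr, hm0, hk0, Fin.val_mk, Nat.cast_zero, Nat.cast_one, sub_zero, abs_zero]
    norm_num

  · -- k = 0, M ≥ 2
    have hM2 : 2 ≤ M := by omega
    have e2 : (∑ n : Fin M, (if (n : ℕ) + 1 = (k : ℕ) then -Cr m n else 0)) = 0 :=
      sum_ite_zero_of _ _ fun n => by omega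
    have e3 : (∑ n : Fin M, (if (k : ℕ) + 1 = (n : ℕ) then -Cr m n else 0))
        = -Cr m ⟨1, by omega⟩ :=
      sum_ite_eq_of_iff _ _ _ (by omega) fun n => by omega
    have e4 : (∑ n : Fin M, (if (n : ℕ) = 0 ∧ (k : ℕ) = M - 1 then Complex.I * Cr m n else 0)) = 0 :=
      sum_ite_zero_of _ _ fun n => by omega
    have e5 : (∑ n : Fin M, (if (n : ℕ) = M - 1 ∧ (k : ℕ) = 0 then -Complex.I * Cr m n else 0))
        = -Complex.I * Cr m ⟨M - 1, by omega⟩ :=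
      sum_ite_eq_of_iff _ _ _ (by omega) fun n => by omega
    rw [e2, e3, e4, e5]
    by_cases hm0 : (m : ℕ) = 0
    · rw [if_pos (Fin.ext (by omega))]
      simp only [hCr, hm0, hk0, Fin.val_mk, Nat.cast_zero, Nat.cast_one, zero_sub, abs_neg,
        abs_one, abs_zero, sub_zero, Nat.abs_cast]
      push_cast [Nat.cast_sub (by omega : 1 ≤ M)]
      rw [Complex.ext_iff]
      constructor <;> simp <;> (try field_simp [hM0]) <;> first | ring1 | exact Or.inr (by ring1) | tauto
    · rw [if_neg (fun h => hm0 (by rw [h]; exact hk0))]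
      have hmle : (m : ℕ) ≤ M - 1 := by have := m.isLt; omega
      simp only [hCr, hk0, Fin.val_mk, Nat.cast_zero, sub_zero, Nat.abs_cast]
      rw [abs_nat_sub_of_ge (by omega : (1:ℕ) ≤ (m:ℕ)), abs_nat_sub_of_le hmle]
      push_cast [Nat.cast_sub (by omega : 1 ≤ M)]
      rw [Complex.ext_iff]
      constructor <;> simp <;> (try field_simp [hM0]) <;> first | ring1 | exact Or.inr (by ring1) | tauto

  · -- k = M - 1, M ≥ 2
    have hM2 : 2 ≤ M := by omega
    have e2 : (∑ n : Fin M, (if (n : ℕ) + 1 = (k : ℕ) then -Cr m n else 0))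
        = -Cr m ⟨M - 2, by omega⟩ :=
      sum_ite_eq_of_iff _ _ _ (by omega) fun n => by omega
    have e3 : (∑ n : Fin M, (if (k : ℕ) + 1 = (n : ℕ) then -Cr m n else 0)) = 0 :=
      sum_ite_zero_of _ _ fun n => by have := n.isLt; omega
    have e4 : (∑ n : Fin M, (if (n : ℕ) = 0 ∧ (k : ℕ) = M - 1 then Complex.I * Cr m n else 0))
        = Complex.I * Cr m ⟨0, by omega⟩ :=
      sum_ite_eq_of_iff _ _ _ (by omega) fun n => by omega
    have e5 : (∑ n : Fin M, (if (n : ℕ) = M - 1 ∧ (k : ℕ) = 0 then -Complex.I * Cr m n else 0)) = 0 :=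
      sum_ite_zero_of _ _ fun n => by omega
    rw [e2, e3, e4, e5]
    by_cases hmM' : (m : ℕ) = M - 1
    · rw [if_pos (Fin.ext (by omega))]
      simp only [hCr, hkM, hmM', Fin.val_mk, Nat.cast_zero, sub_zero,
        abs_nat_sub_of_ge (le_refl (M-1)), abs_nat_sub_of_ge (by omega : M - 2 ≤ M - 1),
        Nat.abs_cast]
      push_cast [Nat.cast_sub (by omega : 1 ≤ M), Nat.cast_sub (by omega : 2 ≤ M)]
      rw [Complex.ext_iff]
      constructor <;> simp <;> (try field_simp [hM0]) <;> first | ring1 | exact Or.inr (by ring1) | tauto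
    · rw [if_neg (fun h => hmM' (by rw [h]; exact hkM))]
      have hmle : (m : ℕ) ≤ M - 2 := by have := m.isLt; omega
      simp only [hCr, hkM, Fin.val_mk, Nat.cast_zero, sub_zero,
        abs_nat_sub_of_le (by omega : (m:ℕ) ≤ M - 1), abs_nat_sub_of_le hmle, Nat.abs_cast]
      push_cast [Nat.cast_sub (by omega : 1 ≤ M), Nat.cast_sub (by omega : 2 ≤ M)]
      rw [Complex.ext_iff]
      constructor <;> simp <;> (try field_simp [hM0]) <;> first | ring1 | exact Or.inr (by ring1) | tauto

  · -- interior: 1 ≤ k ≤ M - 2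
    have hk1 : 1 ≤ (k : ℕ) := by omega
    have hk2 : (k : ℕ) + 1 < M := by have := k.isLt; omega
    have e2 : (∑ n : Fin M, (if (n : ℕ) + 1 = (k : ℕ) then -Cr m n else 0))
        = -Cr m ⟨(k : ℕ) - 1, by omega⟩ :=
      sum_ite_eq_of_iff _ _ _ (by omega) fun n => by omega
    have e3 : (∑ n : Fin M, (if (k : ℕ) + 1 = (n : ℕ) then -Cr m n else 0))
        = -Cr m ⟨(k : ℕ) + 1, hk2⟩ :=
      sum_ite_eq_of_iff _ _ _ hk2 fun n => by omega
    have e4 : (∑ n : Fin M, (if (n : ℕ) = 0 ∧ (k : ℕ) = M - 1 then Complex.I * Cr m n else 0)) = 0 :=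
      sum_ite_zero_of _ _ fun n => by omega
    have e5 : (∑ n : Fin M, (if (n : ℕ) = M - 1 ∧ (k : ℕ) = 0 then -Complex.I * Cr m n else 0)) = 0 :=
      sum_ite_zero_of _ _ fun n => by omega
    rw [e2, e3, e4, e5]
    rcases lt_trichotomy ((m : ℕ)) ((k : ℕ)) with hlt | heq | hgt
    · rw [if_neg (fun h => by rw [h] at hlt; omega)]
      simp only [hCr, Fin.val_mk,
        abs_nat_sub_of_le (le_of_lt hlt), abs_nat_sub_of_le (by omega : (m:ℕ) ≤ (k:ℕ) - 1),
        abs_nat_sub_of_le (by omega : (m:ℕ) ≤ (k:ℕ) + 1)]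
      push_cast [Nat.cast_sub hk1]
      rw [Complex.ext_iff]
      constructor <;> simp <;> (try field_simp [hM0]) <;> first | ring1 | exact Or.inr (by ring1) | tauto
    · rw [if_pos (Fin.ext heq)]
      simp only [hCr, Fin.val_mk, heq,
        abs_nat_sub_of_ge (le_refl ((k:ℕ))), abs_nat_sub_of_ge (by omega : (k:ℕ) - 1 ≤ (k:ℕ)),
        abs_nat_sub_of_le (by omega : (k:ℕ) ≤ (k:ℕ) + 1)]
      push_cast [Nat.cast_sub hk1]
      rw [Complex.ext_iff]
      constructor <;> simp <;> (try field_simp [hM0]) <;> first | ring1 | exact Or.inr (by ring1) | tauto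
    · rw [if_neg (fun h => by rw [h] at hgt; omega)]
      simp only [hCr, Fin.val_mk,
        abs_nat_sub_of_ge (le_of_lt hgt), abs_nat_sub_of_ge (by omega : (k:ℕ) - 1 ≤ (m:ℕ)),
        abs_nat_sub_of_ge (by omega : (k:ℕ) + 1 ≤ (m:ℕ))]
      push_cast [Nat.cast_sub hk1]
      rw [Complex.ext_iff]
      constructor <;> simp <;> (try field_simp [hM0]) <;> first | ring1 | exact Or.inr (by ring1) | tauto


lemma split5' {M : ℕ} (a : Fin M → ℂ) (m : Fin M) :
    (Bmat M).mulVec a m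
      = (M : ℂ) / 2 * ((∑ n : Fin M, (if (n : ℕ) = (m : ℕ) then 2 * a n else 0))
        + (∑ n : Fin M, (if (n : ℕ) = (m : ℕ) + 1 then -a n else 0))
        + (∑ n : Fin M, (if (n : ℕ) + 1 = (m : ℕ) then -a n else 0))
        + (∑ n : Fin M, (if (m : ℕ) = 0 ∧ (n : ℕ) = M - 1 then Complex.I * a n else 0))
        + (∑ n : Fin M, (if (m : ℕ) = M - 1 ∧ (n : ℕ) = 0 then -Complex.I * a n else 0))) := by
  rw [Matrix.mulVec, dotProduct]
  rw [← Finset.sum_add_distrib, ← Finset.sum_add_distrib, ← Finset.sum_add_distrib,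
    ← Finset.sum_add_distrib, Finset.mul_sum]
  refine Finset.sum_congr rfl fun n _ => ?_
  unfold Bmat
  have h1 : ((m : ℕ) = (n : ℕ)) ↔ ((n : ℕ) = (m : ℕ)) := eq_comm
  have h2 : ((m : ℕ) + 1 = (n : ℕ)) ↔ ((n : ℕ) = (m : ℕ) + 1) := eq_comm
  simp only [h1, h2]
  split_ifs <;> ring

lemma row (M : ℕ) (hM : 1 ≤ M) (a : Fin M → ℂ)
    (ha : ∀ m, a m = Complex.exp (Complex.I * ((π * ((m : ℕ) : ℝ) / (2 * M) : ℝ) : ℂ))) :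
    ∀ m, (Bmat M).mulVec a m = ((2 * M * Real.sin (π / (4 * M)) ^ 2 : ℝ) : ℂ) * a m := by
  have hM0 : (M : ℝ) ≠ 0 := Nat.cast_ne_zero.mpr (by omega)
  set θ : ℝ := π / (2 * M) with hθ
  set e : ℂ := Complex.exp (Complex.I * (θ : ℂ)) with he
  set e' : ℂ := Complex.exp (-(Complex.I * (θ : ℂ))) with he'
  have hee' : e * e' = 1 := by rw [he, he', ← Complex.exp_add]; simp
  have hae : ∀ n : Fin M, a n = e ^ (n : ℕ) := by
    intro n
    rw [ha, he, ← Complex.exp_nat_mul]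
    congr 1
    rw [hθ]
    push_cast
    ring
  have heM : e ^ M = Complex.I := by
    rw [he, ← Complex.exp_nat_mul]
    have harg : (M : ℂ) * (Complex.I * (θ : ℂ)) = ((π/2 : ℝ) : ℂ) * Complex.I := by
      have hM0C : (M : ℂ) ≠ 0 := Nat.cast_ne_zero.mpr (by omega)
      rw [hθ]; push_cast; field_simp
    rw [harg, Complex.exp_mul_I, ← Complex.ofReal_cos, ← Complex.ofReal_sin,
      Real.cos_pi_div_two, Real.sin_pi_div_two]
    simp
  have hsum : (2 : ℂ) - e - e' = ((4 * Real.sin (π / (4 * M)) ^ 2 : ℝ) : ℂ) := by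
    rw [he, he', show Complex.I * (θ : ℂ) = (θ : ℂ) * Complex.I from mul_comm _ _,
      show -((θ : ℂ) * Complex.I) = ((-θ : ℝ) : ℂ) * Complex.I from by push_cast; ring,
      Complex.exp_mul_I, Complex.exp_mul_I, ← Complex.ofReal_cos, ← Complex.ofReal_sin,
      ← Complex.ofReal_cos, ← Complex.ofReal_sin, Real.cos_neg, Real.sin_neg]
    have hcos : Real.cos θ = 1 - 2 * Real.sin (π/(4*M))^2 := by
      have h2 : θ = 2 * (π/(4*(M:ℝ))) := by rw [hθ]; field_simp; ring
      rw [h2, Real.sin_sq_eq_half_sub]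
      ring
    rw [hcos]
    push_cast
    ring
  have hc : ((2 * M * Real.sin (π / (4 * M)) ^ 2 : ℝ) : ℂ) = (M : ℂ)/2 * ((2:ℂ) - e - e') := by
    rw [hsum]; push_cast; ring
  intro m
  rw [split5', hc]
  have e1 : (∑ n : Fin M, (if (n : ℕ) = (m : ℕ) then 2 * a n else 0))
      = 2 * a ⟨(m : ℕ), m.isLt⟩ :=
    sum_ite_eq_of_iff _ _ _ m.isLt fun n => Iff.rfl
  rw [e1]
  by_cases hm0 : (m : ℕ) = 0 <;> by_cases hmM : (m : ℕ) = M - 1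
  · -- M = 1
    have hM1 : M = 1 := by omega
    subst hM1
    have e2 : (∑ n : Fin 1, (if (n : ℕ) = (m : ℕ) + 1 then -a n else 0)) = 0 :=
      sum_ite_zero_of _ _ fun n => by have := n.isLt; omega
    have e3 : (∑ n : Fin 1, (if (n : ℕ) + 1 = (m : ℕ) then -a n else 0)) = 0 :=
      sum_ite_zero_of _ _ fun n => by omega
    have e4 : (∑ n : Fin 1, (if (m : ℕ) = 0 ∧ (n : ℕ) = 1 - 1 then Complex.I * a n else 0))
        = Complex.I * a ⟨0, by omega⟩ :=
      sum_ite_eq_of_iff _ _ _ (by omega) fun n => by have := n.isLt; omega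
    have e5 : (∑ n : Fin 1, (if (m : ℕ) = 1 - 1 ∧ (n : ℕ) = 0 then -Complex.I * a n else 0))
        = -Complex.I * a ⟨0, by omega⟩ :=
      sum_ite_eq_of_iff _ _ _ (by omega) fun n => by have := n.isLt; omega
    rw [e2, e3, e4, e5]
    simp only [hae]
    have hm' : m = ⟨0, by omega⟩ := Fin.ext hm0
    rw [hm']
    have heI : e = Complex.I := by simpa using heM
    have he'I : e' = -Complex.I := by
      have h := hee'
      rw [heI] at h
      linear_combination (-Complex.I) * h + e' * Complex.I_mul_I
    simp only [Fin.val_mk, pow_zero]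
    linear_combination (1/2 : ℂ) * heI + (1/2 : ℂ) * he'I
  · -- m = 0, M ≥ 2
    have hM2 : 2 ≤ M := by omega
    have e2 : (∑ n : Fin M, (if (n : ℕ) = (m : ℕ) + 1 then -a n else 0))
        = -a ⟨(m:ℕ) + 1, by omega⟩ :=
      sum_ite_eq_of_iff _ _ _ (by omega) fun n => Iff.rfl
    have e3 : (∑ n : Fin M, (if (n : ℕ) + 1 = (m : ℕ) then -a n else 0)) = 0 :=
      sum_ite_zero_of _ _ fun n => by omega
    have e4 : (∑ n : Fin M, (if (m : ℕ) = 0 ∧ (n : ℕ) = M - 1 then Complex.I * a n else 0))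
        = Complex.I * a ⟨M - 1, by omega⟩ :=
      sum_ite_eq_of_iff _ _ _ (by omega) fun n => by omega
    have e5 : (∑ n : Fin M, (if (m : ℕ) = M - 1 ∧ (n : ℕ) = 0 then -Complex.I * a n else 0)) = 0 :=
      sum_ite_zero_of _ _ fun n => by omega
    rw [e2, e3, e4, e5]
    simp only [hae, Fin.val_mk, hm0, pow_zero, pow_succ]
    -- I * e^(M-1) = - e'
    have hkey : Complex.I * e ^ (M - 1) = -e' := by
      have h1 : e ^ (M - 1) * e = Complex.I := by
        rw [← pow_succ, Nat.sub_add_cancel hM]; exact heM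
      have h2 : e ^ (M - 1) = Complex.I * e' := by
        calc e ^ (M - 1) = e ^ (M - 1) * (e * e') := by rw [hee']; ring
        _ = (e ^ (M - 1) * e) * e' := by ring
        _ = Complex.I * e' := by rw [h1]
      rw [h2]
      calc Complex.I * (Complex.I * e') = (Complex.I * Complex.I) * e' := by ring
      _ = -e' := by rw [Complex.I_mul_I]; ring
    rw [hkey]
    ring
  · -- m = M - 1, M ≥ 2
    have hM2 : 2 ≤ M := by omega
    have e2 : (∑ n : Fin M, (if (n : ℕ) = (m : ℕ) + 1 then -a n else 0)) = 0 :=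
      sum_ite_zero_of _ _ fun n => by have := n.isLt; omega
    have e3 : (∑ n : Fin M, (if (n : ℕ) + 1 = (m : ℕ) then -a n else 0))
        = -a ⟨M - 2, by omega⟩ :=
      sum_ite_eq_of_iff _ _ _ (by omega) fun n => by omega
    have e4 : (∑ n : Fin M, (if (m : ℕ) = 0 ∧ (n : ℕ) = M - 1 then Complex.I * a n else 0)) = 0 :=
      sum_ite_zero_of _ _ fun n => by omega
    have e5 : (∑ n : Fin M, (if (m : ℕ) = M - 1 ∧ (n : ℕ) = 0 then -Complex.I * a n else 0))
        = -Complex.I * a ⟨0, by omega⟩ :=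
      sum_ite_eq_of_iff _ _ _ (by omega) fun n => by omega
    rw [e2, e3, e4, e5]
    simp only [hae, Fin.val_mk, hmM, pow_zero]
    have h1 : e ^ (M - 1) * e = Complex.I := by
      rw [← pow_succ, Nat.sub_add_cancel hM]; exact heM
    have h2 : e ^ (M - 2) = e ^ (M - 1) * e' := by
      have : e ^ (M - 2) * e = e ^ (M - 1) := by
        rw [← pow_succ]; congr 1; omega
      calc e ^ (M - 2) = e ^ (M - 2) * (e * e') := by rw [hee']; ring
      _ = (e ^ (M - 2) * e) * e' := by ring
      _ = e ^ (M - 1) * e' := by rw [this]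
    rw [← h1, h2]
    ring
  · -- interior
    have hm1 : 1 ≤ (m : ℕ) := by omega
    have hm2 : (m : ℕ) + 1 < M := by have := m.isLt; omega
    have e2 : (∑ n : Fin M, (if (n : ℕ) = (m : ℕ) + 1 then -a n else 0))
        = -a ⟨(m:ℕ) + 1, hm2⟩ :=
      sum_ite_eq_of_iff _ _ _ hm2 fun n => Iff.rfl
    have e3 : (∑ n : Fin M, (if (n : ℕ) + 1 = (m : ℕ) then -a n else 0))
        = -a ⟨(m:ℕ) - 1, by omega⟩ :=
      sum_ite_eq_of_iff _ _ _ (by omega) fun n => by omega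
    have e4 : (∑ n : Fin M, (if (m : ℕ) = 0 ∧ (n : ℕ) = M - 1 then Complex.I * a n else 0)) = 0 :=
      sum_ite_zero_of _ _ fun n => by omega
    have e5 : (∑ n : Fin M, (if (m : ℕ) = M - 1 ∧ (n : ℕ) = 0 then -Complex.I * a n else 0)) = 0 :=
      sum_ite_zero_of _ _ fun n => by omega
    rw [e2, e3, e4, e5]
    simp only [hae, Fin.val_mk]
    have h1 : e ^ ((m:ℕ) + 1) = e ^ (m:ℕ) * e := pow_succ e (m:ℕ)
    have h2 : e ^ ((m:ℕ) - 1) = e ^ (m:ℕ) * e' := by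
      have hh : e ^ ((m:ℕ) - 1) * e = e ^ (m:ℕ) := by
        rw [← pow_succ]; congr 1; omega
      calc e ^ ((m:ℕ) - 1) = e ^ ((m:ℕ) - 1) * (e * e') := by rw [hee']; ring
      _ = (e ^ ((m:ℕ) - 1) * e) * e' := by ring
      _ = e ^ (m:ℕ) * e' := by rw [hh]
    rw [h1, h2]
    ring

/-- **Theorem 4.** For the optimal pilot vector `a_m = exp(iπ(m−1)/(2M))`
(`0`-based: `a m = exp(iπm/(2M))`) and the arcsine-law covariance matrix `C_r`,
`aᴴ C_r⁻¹ a = 2M² sin²(π/(4M))`; consequently the Bussgang MSE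
`σ²(1 − (2/π) aᴴ C_r⁻¹ a)` equals the CME MSE `σ²(1 − (4M²/π) sin²(π/(4M)))`. -/
theorem stmt4 (M : ℕ) (hM : 1 ≤ M)
    (Cr : Matrix (Fin M) (Fin M) ℂ)
    (hCr : ∀ m n, Cr m n =
      ((1 - |((m : ℕ) : ℝ) - ((n : ℕ) : ℝ)| / M : ℝ) : ℂ) +
        Complex.I * (((((m : ℕ) : ℝ) - ((n : ℕ) : ℝ)) / M : ℝ) : ℂ))
    (a : Fin M → ℂ)
    (ha : ∀ m, a m = Complex.exp (Complex.I * ((π * ((m : ℕ) : ℝ) / (2 * M) : ℝ) : ℂ))) :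
    star a ⬝ᵥ (Cr⁻¹ *ᵥ a) = ((2 * (M : ℝ) ^ 2 * Real.sin (π / (4 * M)) ^ 2 : ℝ) : ℂ) ∧
    ∀ σ : ℝ, 0 < σ →
      ((σ ^ 2 : ℝ) : ℂ) * (1 - (2 / (π : ℂ)) * (star a ⬝ᵥ (Cr⁻¹ *ᵥ a))) =
        ((σ ^ 2 * (1 - (4 * (M : ℝ) ^ 2 / π) * Real.sin (π / (4 * M)) ^ 2) : ℝ) : ℂ) := by
  have hinv : Cr⁻¹ = Bmat M := Matrix.inv_eq_right_inv (key M hM Cr hCr)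
  have hdot : star a ⬝ᵥ (Cr⁻¹ *ᵥ a)
      = ((2 * (M : ℝ) ^ 2 * Real.sin (π / (4 * M)) ^ 2 : ℝ) : ℂ) := by
    rw [hinv]
    have hrow := row M hM a ha
    have hone : ∀ m : Fin M, star (a m) * a m = 1 := by
      intro m
      rw [ha, Complex.star_def, ← Complex.exp_conj, ← Complex.exp_add]
      have : (starRingEnd ℂ) (Complex.I * ((π * ((m : ℕ) : ℝ) / (2 * M) : ℝ) : ℂ))
          + Complex.I * ((π * ((m : ℕ) : ℝ) / (2 * M) : ℝ) : ℂ) = 0 := by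
        simp only [_root_.map_mul, Complex.conj_I, Complex.conj_ofReal]
        ring
      rw [this, Complex.exp_zero]
    have hterm : ∀ m : Fin M, star (a m) * ((Bmat M).mulVec a m)
        = ((2 * M * Real.sin (π / (4 * M)) ^ 2 : ℝ) : ℂ) := by
      intro m
      rw [hrow m]
      calc star (a m) * (((2 * M * Real.sin (π / (4 * M)) ^ 2 : ℝ) : ℂ) * a m)
          = ((2 * M * Real.sin (π / (4 * M)) ^ 2 : ℝ) : ℂ) * (star (a m) * a m) := by ring
        _ = ((2 * M * Real.sin (π / (4 * M)) ^ 2 : ℝ) : ℂ) := by rw [hone m]; ring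
    simp only [dotProduct, Pi.star_apply]
    rw [Finset.sum_congr rfl (fun m _ => hterm m), Finset.sum_const, Finset.card_univ,
      Fintype.card_fin, nsmul_eq_mul]
    push_cast
    ring
  refine ⟨hdot, fun σ hσ => ?_⟩
  rw [hdot]
  have hπC : (π : ℂ) ≠ 0 := Complex.ofReal_ne_zero.mpr Real.pi_ne_zero
  push_cast
  ring
end

section
/- Let σ > 0 and η > 0, let X and W be independent real random variables with X ~ N(0, σ²/2) and W ~ N(0, η²/2), and set c = σ² / (√π √(σ² + η²)). Then E[(X − c · sign(X + W))²] = σ²/2 − σ⁴ / (π (σ² + η²)). -/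
open MeasureTheory ProbabilityTheory Real

open MeasureTheory ProbabilityTheory Real Filter Set
open scoped NNReal ENNReal

lemma measurable_realSign : Measurable Real.sign := by
  unfold Real.sign
  exact (measurable_const.ite measurableSet_Iio
    (measurable_const.ite measurableSet_Ioi measurable_const))

section GaussHelpers
variable {v : ℝ≥0}

lemma gaussianPDFReal_zero_eq (v : ℝ≥0) (x : ℝ) :
    gaussianPDFReal 0 v x
      = (Real.sqrt (2 * π * v))⁻¹ * Real.exp (-(2 * (v : ℝ))⁻¹ * x ^ 2) := by
  rw [gaussianPDFReal, sub_zero]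
  congr 1
  ring

lemma integral_gaussianReal_restrict (hv : v ≠ 0) {s : Set ℝ} (hs : MeasurableSet s)
    (f : ℝ → ℝ) :
    ∫ x in s, f x ∂(gaussianReal 0 v)
      = ∫ x in s, gaussianPDFReal 0 v x * f x := by
  rw [gaussianReal_of_var_ne_zero _ hv, restrict_withDensity hs]
  have hd : gaussianPDF 0 v = fun x => ((Real.toNNReal (gaussianPDFReal 0 v x) : ℝ≥0) : ℝ≥0∞) :=
    rfl
  rw [hd, integral_withDensity_eq_integral_smul
    ((measurable_gaussianPDFReal 0 v).real_toNNReal) f]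
  refine integral_congr_ae (Filter.Eventually.of_forall fun x => ?_)
  simp [NNReal.smul_def, Real.coe_toNNReal _ (gaussianPDFReal_nonneg 0 v x)]

lemma integral_gaussianReal_univ (hv : v ≠ 0) (f : ℝ → ℝ) :
    ∫ x, f x ∂(gaussianReal 0 v) = ∫ x, gaussianPDFReal 0 v x * f x := by
  have := integral_gaussianReal_restrict hv MeasurableSet.univ f
  simpa using this

lemma integrable_gaussianReal_iff (hv : v ≠ 0) {f : ℝ → ℝ} :
    Integrable f (gaussianReal 0 v)
      ↔ Integrable (fun x => f x * gaussianPDFReal 0 v x) volume := by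
  rw [gaussianReal_of_var_ne_zero _ hv]
  rw [integrable_withDensity_iff (measurable_gaussianPDF 0 v)
    (Filter.Eventually.of_forall fun x => ENNReal.ofReal_lt_top)]
  constructor <;> intro h <;> refine h.congr (Filter.Eventually.of_forall fun x => ?_) <;>
    simp [gaussianPDF, ENNReal.toReal_ofReal (gaussianPDFReal_nonneg 0 v x)]

end GaussHelpers

lemma hasDerivAt_negExpSq {b : ℝ} (hb : 0 < b) (x : ℝ) :
    HasDerivAt (fun x => -(2 * b)⁻¹ * Real.exp (-b * x ^ 2)) (x * Real.exp (-b * x ^ 2)) x := by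
  have h1 : HasDerivAt (fun x : ℝ => -b * x ^ 2) (-b * (2 * x)) x := by
    simpa using ((hasDerivAt_pow 2 x).const_mul (-b))
  have h2 := (h1.exp).const_mul (-(2 * b)⁻¹)
  refine h2.congr_deriv ?_
  rw [show -(2 * b)⁻¹ * (Real.exp (-b * x ^ 2) * (-b * (2 * x))) = (2 * b)⁻¹ * (2 * b) * (x * Real.exp (-b * x ^ 2)) by ring, inv_mul_cancel₀ (by positivity)]
  ring

lemma tendsto_mul_exp_negSq_cocompact {b : ℝ} (hb : 0 < b) :
    Tendsto (fun x : ℝ => x * Real.exp (-b * x ^ 2)) (Filter.cocompact ℝ) (nhds 0) := by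
  have h := tendsto_rpow_abs_mul_exp_neg_mul_sq_cocompact hb 1
  rw [tendsto_zero_iff_norm_tendsto_zero]
  refine h.congr' ?_
  filter_upwards with x
  rw [Real.rpow_one, Real.norm_eq_abs, abs_mul, abs_of_nonneg (Real.exp_nonneg _)]

lemma tendsto_exp_negSq_atTop {b : ℝ} (hb : 0 < b) :
    Tendsto (fun x : ℝ => Real.exp (-b * x ^ 2)) atTop (nhds 0) := by
  apply Real.tendsto_exp_atBot.comp
  have : Tendsto (fun x : ℝ => x ^ 2) atTop atTop := tendsto_pow_atTop two_ne_zero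
  exact (tendsto_neg_atBot_iff.mpr (this.const_mul_atTop hb)).congr (fun x => by ring)

lemma tendsto_negExpSq_atTop {b : ℝ} (hb : 0 < b) :
    Tendsto (fun x : ℝ => -(2 * b)⁻¹ * Real.exp (-b * x ^ 2)) atTop (nhds 0) := by
  simpa using (tendsto_exp_negSq_atTop hb).const_mul (-(2 * b)⁻¹)

lemma tendsto_negExpSq_atBot {b : ℝ} (hb : 0 < b) :
    Tendsto (fun x : ℝ => -(2 * b)⁻¹ * Real.exp (-b * x ^ 2)) atBot (nhds 0) := by
  have h := (tendsto_negExpSq_atTop hb).comp tendsto_neg_atBot_atTop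
  refine h.congr (fun x => ?_)
  simp [Function.comp, neg_sq]

lemma integral_Ioi_mul_exp {b : ℝ} (hb : 0 < b) (t : ℝ) :
    ∫ x in Ioi t, x * Real.exp (-b * x ^ 2) = (2 * b)⁻¹ * Real.exp (-b * t ^ 2) := by
  have := integral_Ioi_of_hasDerivAt_of_tendsto
    (f := fun x => -(2 * b)⁻¹ * Real.exp (-b * x ^ 2))
    (f' := fun x => x * Real.exp (-b * x ^ 2)) (a := t) (m := 0)
    (((hasDerivAt_negExpSq hb t).continuousAt).continuousWithinAt)
    (fun x _ => hasDerivAt_negExpSq hb x)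
    ((integrable_mul_exp_neg_mul_sq hb).integrableOn)
    (tendsto_negExpSq_atTop hb)
  rw [this]; ring

lemma integral_Iic_mul_exp {b : ℝ} (hb : 0 < b) (t : ℝ) :
    ∫ x in Iic t, x * Real.exp (-b * x ^ 2) = -(2 * b)⁻¹ * Real.exp (-b * t ^ 2) := by
  have := integral_Iic_of_hasDerivAt_of_tendsto
    (f := fun x => -(2 * b)⁻¹ * Real.exp (-b * x ^ 2))
    (f' := fun x => x * Real.exp (-b * x ^ 2)) (a := t) (m := 0)
    (((hasDerivAt_negExpSq hb t).continuousAt).continuousWithinAt)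
    (fun x _ => hasDerivAt_negExpSq hb x)
    ((integrable_mul_exp_neg_mul_sq hb).integrableOn)
    (tendsto_negExpSq_atBot hb)
  rw [this]; ring

lemma integrable_sq_mul_exp {b : ℝ} (hb : 0 < b) :
    Integrable (fun x : ℝ => x ^ 2 * Real.exp (-b * x ^ 2)) := by
  have h := integrable_rpow_mul_exp_neg_mul_sq hb (s := 2) (by norm_num)
  refine h.congr (Filter.Eventually.of_forall fun x => ?_)
  show x ^ (2 : ℝ) * Real.exp (-b * x ^ 2) = x ^ 2 * Real.exp (-b * x ^ 2)
  rw [show ((2 : ℝ) = ((2 : ℕ) : ℝ)) by norm_num, Real.rpow_natCast]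

lemma integral_sq_mul_exp {b : ℝ} (hb : 0 < b) :
    ∫ x : ℝ, x ^ 2 * Real.exp (-b * x ^ 2) = (2 * b)⁻¹ * Real.sqrt (π / b) := by
  have h := integral_mul_deriv_eq_deriv_mul
    (u := fun x : ℝ => x) (u' := fun _ => (1 : ℝ))
    (v := fun x => -(2 * b)⁻¹ * Real.exp (-b * x ^ 2))
    (v' := fun x => x * Real.exp (-b * x ^ 2))
    (a' := (0 : ℝ)) (b' := (0 : ℝ))
    (fun x _ => hasDerivAt_id x) (fun x _ => hasDerivAt_negExpSq hb x)
    ?_ ?_ ?_ ?_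
  · have : ∫ x : ℝ, x * (x * Real.exp (-b * x ^ 2)) = 0 - 0 - ∫ x : ℝ, 1 * (-(2 * b)⁻¹ * Real.exp (-b * x ^ 2)) := h
    rw [show (fun x : ℝ => x ^ 2 * Real.exp (-b * x ^ 2)) = fun x : ℝ => x * (x * Real.exp (-b * x ^ 2)) by funext x; ring, this]
    simp only [one_mul]
    rw [integral_const_mul, integral_gaussian]
    ring
  · refine (integrable_sq_mul_exp hb).congr
      (Filter.Eventually.of_forall fun x => ?_)
    simp only [Pi.mul_apply]; ring
  · refine ((integrable_exp_neg_mul_sq hb).const_mul (-(2 * b)⁻¹)).congr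
      (Filter.Eventually.of_forall fun x => ?_)
    simp only [Pi.mul_apply]; ring
  · have h2 := (tendsto_mul_exp_negSq_cocompact hb).mono_left _root_.atBot_le_cocompact
    simpa using (h2.const_mul (-(2 * b)⁻¹)).congr (fun x => by simp [Pi.mul_apply]; ring)
  · have h2 := (tendsto_mul_exp_negSq_cocompact hb).mono_left _root_.atTop_le_cocompact
    simpa using (h2.const_mul (-(2 * b)⁻¹)).congr (fun x => by simp [Pi.mul_apply]; ring)

section GaussMoments
variable {v : ℝ≥0}

lemma coe_pos_of_ne_zero (hv : v ≠ 0) : (0 : ℝ) < v := by exact_mod_cast hv.bot_lt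

lemma sqrt_two_pi_v_pos (hv : v ≠ 0) : 0 < Real.sqrt (2 * π * v) := by
  have h0 := coe_pos_of_ne_zero hv
  have := Real.pi_pos
  positivity

lemma integrable_id_gaussianReal (hv : v ≠ 0) :
    Integrable (fun x : ℝ => x) (gaussianReal 0 v) := by
  rw [integrable_gaussianReal_iff hv]
  have hb : 0 < (2 * (v : ℝ))⁻¹ := by have := coe_pos_of_ne_zero hv; positivity
  refine ((integrable_mul_exp_neg_mul_sq hb).const_mul (Real.sqrt (2 * π * v))⁻¹).congr
    (Filter.Eventually.of_forall fun x => ?_)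
  show _ = x * gaussianPDFReal 0 v x
  rw [gaussianPDFReal_zero_eq]
  ring

lemma integrable_sq_gaussianReal (hv : v ≠ 0) :
    Integrable (fun x : ℝ => x ^ 2) (gaussianReal 0 v) := by
  rw [integrable_gaussianReal_iff hv]
  have hb : 0 < (2 * (v : ℝ))⁻¹ := by have := coe_pos_of_ne_zero hv; positivity
  refine ((integrable_sq_mul_exp hb).const_mul (Real.sqrt (2 * π * v))⁻¹).congr
    (Filter.Eventually.of_forall fun x => ?_)
  show _ = x ^ 2 * gaussianPDFReal 0 v x
  rw [gaussianPDFReal_zero_eq]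
  ring

lemma integral_sq_gaussianReal (hv : v ≠ 0) :
    ∫ x : ℝ, x ^ 2 ∂(gaussianReal 0 v) = v := by
  have h0 := coe_pos_of_ne_zero hv
  have hb : 0 < (2 * (v : ℝ))⁻¹ := by positivity
  rw [integral_gaussianReal_univ hv]
  have : ∀ x : ℝ, gaussianPDFReal 0 v x * x ^ 2
      = (Real.sqrt (2 * π * v))⁻¹ * (x ^ 2 * Real.exp (-(2 * (v : ℝ))⁻¹ * x ^ 2)) := by
    intro x; rw [gaussianPDFReal_zero_eq]; ring
  simp_rw [this]
  rw [integral_const_mul, integral_sq_mul_exp hb]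
  have h2 : (2 * ((2 * (v : ℝ))⁻¹))⁻¹ = v := by field_simp
  have h3 : π / (2 * (v : ℝ))⁻¹ = 2 * π * v := by field_simp
  rw [h2, h3]
  field_simp

lemma setIntegral_id_Ioi_gaussianReal (hv : v ≠ 0) (t : ℝ) :
    ∫ x in Ioi t, x ∂(gaussianReal 0 v) = v * gaussianPDFReal 0 v t := by
  have h0 := coe_pos_of_ne_zero hv
  have hb : 0 < (2 * (v : ℝ))⁻¹ := by positivity
  rw [integral_gaussianReal_restrict hv measurableSet_Ioi]
  have : ∀ x : ℝ, gaussianPDFReal 0 v x * x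
      = (Real.sqrt (2 * π * v))⁻¹ * (x * Real.exp (-(2 * (v : ℝ))⁻¹ * x ^ 2)) := by
    intro x; rw [gaussianPDFReal_zero_eq]; ring
  simp_rw [this]
  rw [integral_const_mul, integral_Ioi_mul_exp hb]
  rw [gaussianPDFReal_zero_eq]
  have h2 : (2 * ((2 * (v : ℝ))⁻¹))⁻¹ = v := by field_simp
  rw [h2]
  ring

lemma setIntegral_id_Iic_gaussianReal (hv : v ≠ 0) (t : ℝ) :
    ∫ x in Iic t, x ∂(gaussianReal 0 v) = -(v * gaussianPDFReal 0 v t) := by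
  have h0 := coe_pos_of_ne_zero hv
  have hb : 0 < (2 * (v : ℝ))⁻¹ := by positivity
  rw [integral_gaussianReal_restrict hv measurableSet_Iic]
  have : ∀ x : ℝ, gaussianPDFReal 0 v x * x
      = (Real.sqrt (2 * π * v))⁻¹ * (x * Real.exp (-(2 * (v : ℝ))⁻¹ * x ^ 2)) := by
    intro x; rw [gaussianPDFReal_zero_eq]; ring
  simp_rw [this]
  rw [integral_const_mul, integral_Iic_mul_exp hb]
  rw [gaussianPDFReal_zero_eq]
  have h2 : (2 * ((2 * (v : ℝ))⁻¹))⁻¹ = v := by field_simp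
  rw [h2]
  ring

end GaussMoments

section SignCross
variable {v v₁ v₂ : ℝ≥0}

lemma gaussianPDFReal_zero_neg (v : ℝ≥0) (w : ℝ) :
    gaussianPDFReal 0 v (-w) = gaussianPDFReal 0 v w := by
  rw [gaussianPDFReal_zero_eq, gaussianPDFReal_zero_eq, show (-w) ^ 2 = w ^ 2 by ring]

lemma integral_pdf_mul_pdf (hv₁ : v₁ ≠ 0) (hv₂ : v₂ ≠ 0) :
    ∫ x : ℝ, gaussianPDFReal 0 v₁ x * gaussianPDFReal 0 v₂ x
      = (Real.sqrt (2 * π * ((v₁ : ℝ) + (v₂ : ℝ))))⁻¹ := by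
  have h₁ := coe_pos_of_ne_zero hv₁
  have h₂ := coe_pos_of_ne_zero hv₂
  have hπ := Real.pi_pos
  have hb : 0 < (2 * (v₁ : ℝ))⁻¹ + (2 * (v₂ : ℝ))⁻¹ := by positivity
  have key : ∀ x : ℝ, gaussianPDFReal 0 v₁ x * gaussianPDFReal 0 v₂ x
      = (Real.sqrt (2 * π * v₁))⁻¹ * (Real.sqrt (2 * π * v₂))⁻¹
        * Real.exp (-((2 * (v₁ : ℝ))⁻¹ + (2 * (v₂ : ℝ))⁻¹) * x ^ 2) := by
    intro x
    rw [gaussianPDFReal_zero_eq, gaussianPDFReal_zero_eq,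
      show -((2 * (v₁ : ℝ))⁻¹ + (2 * (v₂ : ℝ))⁻¹) * x ^ 2
        = -(2 * (v₁ : ℝ))⁻¹ * x ^ 2 + (-(2 * (v₂ : ℝ))⁻¹ * x ^ 2) by ring, Real.exp_add]
    ring
  simp_rw [key]
  rw [integral_const_mul, integral_gaussian]
  rw [← Real.sqrt_inv, ← Real.sqrt_inv, ← Real.sqrt_inv,
    ← Real.sqrt_mul (by positivity), ← Real.sqrt_mul (by positivity)]
  congr 1
  have hbne : (2 * (v₁ : ℝ))⁻¹ + (2 * (v₂ : ℝ))⁻¹ ≠ 0 := hb.ne'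
  rw [eq_comm, inv_eq_iff_eq_inv]
  field_simp
  ring

lemma integral_id_mul_sign (hv : v ≠ 0) (w : ℝ) :
    ∫ x, x * Real.sign (x + w) ∂(gaussianReal 0 v)
      = 2 * v * gaussianPDFReal 0 v w := by
  have hnull : (gaussianReal 0 v) {-w} = 0 :=
    gaussianReal_absolutelyContinuous 0 hv (Real.volume_singleton)
  have hae : ∀ᵐ x ∂(gaussianReal 0 v), x ≠ -w := by
    rw [ae_iff]
    simpa using hnull
  have hc : (fun x : ℝ => x * Real.sign (x + w))
      =ᵐ[gaussianReal 0 v]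
      fun x => (Ioi (-w)).indicator (fun x => x) x + (Iic (-w)).indicator (fun x => -x) x := by
    filter_upwards [hae] with x hx
    rcases lt_or_gt_of_ne hx with h | h
    · rw [Real.sign_of_neg (by linarith), indicator_of_notMem (notMem_Ioi.mpr h.le),
        indicator_of_mem (mem_Iic.mpr h.le)]
      ring
    · rw [Real.sign_of_pos (by linarith), indicator_of_mem (mem_Ioi.mpr h),
        indicator_of_notMem (notMem_Iic.mpr h)]
      ring
  have hid := integrable_id_gaussianReal hv
  have h2 : Integrable (fun x : ℝ => -x) (gaussianReal 0 v) := hid.neg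
  rw [integral_congr_ae hc, integral_add
    (hid.indicator measurableSet_Ioi)
    (h2.indicator measurableSet_Iic),
    integral_indicator measurableSet_Ioi, integral_indicator measurableSet_Iic,
    setIntegral_id_Ioi_gaussianReal hv, integral_neg,
    setIntegral_id_Iic_gaussianReal hv, gaussianPDFReal_zero_neg]
  ring

end SignCross

lemma abs_realSign_le_one (t : ℝ) : |Real.sign t| ≤ 1 := by
  rcases Real.sign_apply_eq t with h | h | h <;> rw [h] <;> norm_num


/-- Mean square error of the conditional mean estimator
`c · sign(X + W)` with `c = σ²/(√π √(σ²+η²))` for `X ~ N(0, σ²/2)` observed through the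
one-bit quantization of `X + W`, `W ~ N(0, η²/2)` independent of `X`:
`E[(X − c·sign(X+W))²] = σ²/2 − σ⁴/(π(σ²+η²))`. -/
theorem stmt9 {Ω : Type*} [MeasureSpace Ω] [IsProbabilityMeasure (ℙ : Measure Ω)]
    (σ η : ℝ) (hσ : 0 < σ) (hη : 0 < η)
    (X W : Ω → ℝ) (hX : Measurable X) (hW : Measurable W)
    (hXd : Measure.map X ℙ = gaussianReal 0 ⟨σ ^ 2 / 2, by positivity⟩)
    (hWd : Measure.map W ℙ = gaussianReal 0 ⟨η ^ 2 / 2, by positivity⟩)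
    (hindep : IndepFun X W)
    (c : ℝ) (hc : c = σ ^ 2 / (Real.sqrt π * Real.sqrt (σ ^ 2 + η ^ 2))) :
    ∫ ω, (X ω - c * Real.sign (X ω + W ω)) ^ 2 =
      σ ^ 2 / 2 - σ ^ 4 / (π * (σ ^ 2 + η ^ 2)) := by
  have hπ := Real.pi_pos
  set vb : ℝ≥0 := ⟨σ ^ 2 / 2, by positivity⟩ with hvbdef
  set vd : ℝ≥0 := ⟨η ^ 2 / 2, by positivity⟩ with hvddef
  have hvbR : (vb : ℝ) = σ ^ 2 / 2 := rfl
  have hvdR : (vd : ℝ) = η ^ 2 / 2 := rfl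
  have hvb0 : vb ≠ 0 := by
    rw [← NNReal.coe_ne_zero, hvbR]; positivity
  have hvd0 : vd ≠ 0 := by
    rw [← NNReal.coe_ne_zero, hvdR]; positivity
  set μ := gaussianReal 0 vb with hμ
  set ν := gaussianReal 0 vd with hν
  set P := μ.prod ν with hP
  -- the joint law
  have hmap : Measure.map (fun ω => (X ω, W ω)) ℙ = P := by
    rw [hP, ← hXd, ← hWd]
    exact ((indepFun_iff_map_prod_eq_prod_map_map hX.aemeasurable hW.aemeasurable).mp hindep)
  -- measurability
  have hs : Measurable (fun p : ℝ × ℝ => Real.sign (p.1 + p.2)) :=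
    measurable_realSign.comp (measurable_fst.add measurable_snd)
  have hg : Measurable (fun p : ℝ × ℝ => (p.1 - c * Real.sign (p.1 + p.2)) ^ 2) :=
    (measurable_fst.sub (hs.const_mul c)).pow_const 2
  -- transfer to the product measure
  have htrans : ∫ ω, (X ω - c * Real.sign (X ω + W ω)) ^ 2
      = ∫ p : ℝ × ℝ, (p.1 - c * Real.sign (p.1 + p.2)) ^ 2 ∂P := by
    rw [← hmap]
    exact (integral_map (hX.aemeasurable.prodMk hW.aemeasurable)
      hg.aestronglyMeasurable).symm
  -- transfer of first-coordinate integrands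
  have hmapfst : Measure.map Prod.fst P = μ := by
    rw [← Measure.fst, hP]; exact Measure.fst_prod
  have keyInt : ∀ {f : ℝ → ℝ}, Measurable f → Integrable f μ →
      Integrable (fun p : ℝ × ℝ => f p.1) P := by
    intro f hfm hfi
    have h := (integrable_map_measure (μ := P) (f := Prod.fst) (g := f)
      (by rw [hmapfst]; exact hfm.aestronglyMeasurable)
      measurable_fst.aemeasurable)
    rw [hmapfst] at h
    exact h.mp hfi
  have keyI : ∀ {f : ℝ → ℝ}, Measurable f →
      (∫ p : ℝ × ℝ, f p.1 ∂P) = ∫ x, f x ∂μ := by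
    intro f hfm
    conv_rhs => rw [← hmapfst]
    rw [integral_map measurable_fst.aemeasurable
      (by rw [hmapfst]; exact hfm.aestronglyMeasurable)]
  -- integrability of the pieces
  have intSq : Integrable (fun p : ℝ × ℝ => p.1 ^ 2) P :=
    keyInt (measurable_id.pow_const 2) (integrable_sq_gaussianReal hvb0)
  have intAbs : Integrable (fun p : ℝ × ℝ => |p.1|) P :=
    keyInt measurable_id.abs (integrable_id_gaussianReal hvb0).abs
  have intCross : Integrable (fun p : ℝ × ℝ => p.1 * Real.sign (p.1 + p.2)) P := by
    refine Integrable.mono' intAbs (measurable_fst.mul hs).aestronglyMeasurable ?_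
    refine Filter.Eventually.of_forall fun p => ?_
    rw [Real.norm_eq_abs, abs_mul]
    calc |p.1| * |Real.sign (p.1 + p.2)| ≤ |p.1| * 1 :=
          mul_le_mul_of_nonneg_left (abs_realSign_le_one _) (abs_nonneg _)
      _ = |p.1| := mul_one _
  have intS2 : Integrable (fun p : ℝ × ℝ => Real.sign (p.1 + p.2) ^ 2) P := by
    refine Integrable.mono' (integrable_const 1) (hs.pow_const 2).aestronglyMeasurable ?_
    refine Filter.Eventually.of_forall fun p => ?_
    rw [Real.norm_eq_abs, abs_pow]
    calc |Real.sign (p.1 + p.2)| ^ 2 ≤ 1 ^ 2 := by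
          exact pow_le_pow_left₀ (abs_nonneg _) (abs_realSign_le_one _) 2
      _ = 1 := one_pow 2
  -- sign squared is a.e. one
  have hnull : P {p : ℝ × ℝ | p.1 + p.2 = 0} = 0 := by
    have hmeas : MeasurableSet {p : ℝ × ℝ | p.1 + p.2 = 0} :=
      (measurable_fst.add measurable_snd) (measurableSet_singleton 0)
    rw [hP, Measure.prod_apply hmeas]
    have hz : ∀ x : ℝ, ν (Prod.mk x ⁻¹' {p : ℝ × ℝ | p.1 + p.2 = 0}) = 0 := by
      intro x
      have : Prod.mk x ⁻¹' {p : ℝ × ℝ | p.1 + p.2 = 0} = {-x} := by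
        ext y
        simp only [mem_preimage, mem_setOf_eq, mem_singleton_iff]
        constructor <;> intro h <;> linarith
      rw [this, hν]
      exact gaussianReal_absolutelyContinuous 0 hvd0 Real.volume_singleton
    rw [lintegral_congr hz]
    simp
  have hS2ae : (fun p : ℝ × ℝ => Real.sign (p.1 + p.2) ^ 2) =ᵐ[P] fun _ => (1 : ℝ) := by
    have hane : ∀ᵐ p ∂P, p.1 + p.2 ≠ 0 := by
      rw [ae_iff]
      simpa using hnull
    filter_upwards [hane] with p hp
    rcases Real.sign_apply_eq_of_ne_zero _ hp with h | h <;> rw [h] <;> norm_num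
  -- expand the square
  have hfeq : (fun p : ℝ × ℝ => (p.1 - c * Real.sign (p.1 + p.2)) ^ 2)
      = fun p : ℝ × ℝ => (p.1 ^ 2 + (-(2 * c)) * (p.1 * Real.sign (p.1 + p.2)))
          + c ^ 2 * Real.sign (p.1 + p.2) ^ 2 := by
    funext p; ring
  have int1 : Integrable (fun p : ℝ × ℝ =>
      p.1 ^ 2 + (-(2 * c)) * (p.1 * Real.sign (p.1 + p.2))) P :=
    intSq.add (intCross.const_mul (-(2 * c)))
  have int2 : Integrable (fun p : ℝ × ℝ =>
      c ^ 2 * Real.sign (p.1 + p.2) ^ 2) P := intS2.const_mul (c ^ 2)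
  rw [htrans, hfeq, integral_add int1 int2,
    integral_add intSq (intCross.const_mul (-(2 * c))),
    integral_const_mul, integral_const_mul]
  -- second moment term
  have hM2 : (∫ p : ℝ × ℝ, p.1 ^ 2 ∂P) = σ ^ 2 / 2 := by
    rw [keyI (f := fun x : ℝ => x ^ 2) (by fun_prop), hμ, integral_sq_gaussianReal hvb0, hvbR]
  -- sign squared term
  have hS2 : (∫ p : ℝ × ℝ, Real.sign (p.1 + p.2) ^ 2 ∂P) = 1 := by
    rw [integral_congr_ae hS2ae]
    simp
  -- cross term
  have hsqrtKey : Real.sqrt (2 * π * ((vb : ℝ) + (vd : ℝ)))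
      = Real.sqrt π * Real.sqrt (σ ^ 2 + η ^ 2) := by
    rw [hvbR, hvdR, show 2 * π * (σ ^ 2 / 2 + η ^ 2 / 2) = π * (σ ^ 2 + η ^ 2) by ring]
    exact Real.sqrt_mul hπ.le _
  have hcross : (∫ p : ℝ × ℝ, p.1 * Real.sign (p.1 + p.2) ∂P) = c := by
    rw [hP, integral_prod_symm _ intCross]
    have hinner : ∀ w : ℝ, (∫ x, x * Real.sign (x + w) ∂μ)
        = 2 * (vb : ℝ) * gaussianPDFReal 0 vb w := fun w =>
      integral_id_mul_sign hvb0 w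
    simp only [hinner]
    rw [hν, integral_gaussianReal_univ hvd0]
    have : ∀ w : ℝ, gaussianPDFReal 0 vd w * (2 * (vb : ℝ) * gaussianPDFReal 0 vb w)
        = 2 * (vb : ℝ) * (gaussianPDFReal 0 vb w * gaussianPDFReal 0 vd w) := by
      intro w; ring
    simp_rw [this]
    rw [integral_const_mul, integral_pdf_mul_pdf hvb0 hvd0, hsqrtKey, hc, hvbR]
    rw [div_eq_mul_inv]
    ring
  have hc2 : c ^ 2 = σ ^ 4 / (π * (σ ^ 2 + η ^ 2)) := by
    rw [hc, div_pow, mul_pow, Real.sq_sqrt hπ.le, Real.sq_sqrt (by positivity : (0:ℝ) ≤ σ ^ 2 + η ^ 2)]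
    ring
  calc (∫ p : ℝ × ℝ, p.1 ^ 2 ∂P) + -(2 * c) * (∫ p : ℝ × ℝ, p.1 * Real.sign (p.1 + p.2) ∂P)
        + c ^ 2 * (∫ p : ℝ × ℝ, Real.sign (p.1 + p.2) ^ 2 ∂P)
      = σ ^ 2 / 2 + -(2 * c) * c + c ^ 2 * 1 := by rw [hM2, hcross, hS2]
    _ = σ ^ 2 / 2 - c ^ 2 := by ring
    _ = σ ^ 2 / 2 - σ ^ 4 / (π * (σ ^ 2 + η ^ 2)) := by rw [hc2]
end

section
/- Let M ≥ 1 be an integer and σ > 0. Define κ = (2Mσ/√π) sin(π/(4M)) and, for θ ∈ [0, 2π), let ĥ(θ) = κ · exp(i(π/(4M) + (π/(2M))·⌊2Mθ/π⌋)), i.e., ĥ is constant on each sector [kπ/(2M), (k+1)π/(2M)), k = 0, …, 4M−1. Then (1/(2π)) ∫_0^{2π} ∫_0^∞ |α e^{iθ} − ĥ(θ)|² · (2α/σ²) e^{−α²/σ²} dα dθ = σ² (1 − (4M²/π) sin²(π/(4M))). -/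
open Real MeasureTheory

section Aux
open Set

lemma momgen {σ : ℝ} (hσ : 0 < σ) (n : ℕ) :
    ∫ x in Ioi (0:ℝ), x ^ n * Real.exp (-x^2/σ^2) =
      ((σ^2)⁻¹ : ℝ) ^ (-((n:ℝ)+1)/2) * (1/2) * Real.Gamma (((n:ℝ)+1)/2) := by
  rw [← integral_rpow_mul_exp_neg_mul_rpow two_pos (lt_of_lt_of_le neg_one_lt_zero (Nat.cast_nonneg n)) (by positivity : (0:ℝ) < (σ^2)⁻¹)]
  refine setIntegral_congr_fun measurableSet_Ioi (fun x hx => ?_)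
  rw [Real.rpow_natCast, Real.rpow_two]
  congr 1
  ring_nf

lemma rpowbase {σ : ℝ} (hσ : 0 < σ) (r : ℝ) (n : ℕ) (h : 2 * -r = (n:ℝ)) :
    ((σ^2)⁻¹ : ℝ) ^ r = σ ^ n := by
  rw [Real.inv_rpow (by positivity), ← Real.rpow_neg (by positivity),
    ← Real.rpow_natCast σ 2, ← Real.rpow_mul hσ.le, show ((2:ℕ):ℝ) * -r = (n:ℝ) by push_cast at h ⊢; linarith,
    Real.rpow_natCast]

lemma m1 {σ : ℝ} (hσ : 0 < σ) : ∫ x in Ioi (0:ℝ), x * Real.exp (-x^2/σ^2) = σ^2/2 := by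
  have := momgen hσ 1
  simp only [pow_one] at this
  rw [this, rpowbase hσ _ 2 (by norm_num)]
  norm_num
  ring

lemma m2 {σ : ℝ} (hσ : 0 < σ) :
    ∫ x in Ioi (0:ℝ), x^2 * Real.exp (-x^2/σ^2) = Real.sqrt π * σ^3/4 := by
  rw [momgen hσ 2, rpowbase hσ _ 3 (by norm_num)]
  norm_num
  rw [show (3:ℝ)/2 = 1/2 + 1 by norm_num, Real.Gamma_add_one (by norm_num), Real.Gamma_one_half_eq]
  ring

lemma m3 {σ : ℝ} (hσ : 0 < σ) : ∫ x in Ioi (0:ℝ), x^3 * Real.exp (-x^2/σ^2) = σ^4/2 := by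
  rw [momgen hσ 3, rpowbase hσ _ 4 (by norm_num)]
  norm_num
  ring

lemma intOn {σ : ℝ} (hσ : 0 < σ) (n : ℕ) :
    IntegrableOn (fun x : ℝ => x ^ n * Real.exp (-x^2/σ^2)) (Ioi 0) := by
  have h := integrableOn_rpow_mul_exp_neg_mul_sq (b := (σ^2)⁻¹) (by positivity)
    (s := (n:ℝ)) (lt_of_lt_of_le neg_one_lt_zero (Nat.cast_nonneg n))
  refine h.congr_fun (fun x hx => ?_) measurableSet_Ioi
  dsimp only
  rw [Real.rpow_natCast]
  congr 1
  ring_nf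

lemma inner_int {σ : ℝ} (hσ : 0 < σ) (κ c : ℝ) :
    ∫ α in Ioi (0:ℝ), (α^2 - 2*κ*c*α + κ^2) * (2*α/σ^2) * Real.exp (-α^2/σ^2)
      = σ^2 + κ^2 - Real.sqrt π * σ * κ * c := by
  have hrw : ∀ α : ℝ, (α^2 - 2*κ*c*α + κ^2) * (2*α/σ^2) * Real.exp (-α^2/σ^2)
      = (2/σ^2) * (α^3 * Real.exp (-α^2/σ^2)) - (4*κ*c/σ^2) * (α^2 * Real.exp (-α^2/σ^2))
        + (2*κ^2/σ^2) * (α^1 * Real.exp (-α^2/σ^2)) := by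
    intro α; ring
  simp_rw [hrw]
  have h3 : IntegrableOn (fun α : ℝ => (2/σ^2) * (α^3 * Real.exp (-α^2/σ^2))) (Ioi 0) :=
    (intOn hσ 3).const_mul _
  have h2 : IntegrableOn (fun α : ℝ => (4*κ*c/σ^2) * (α^2 * Real.exp (-α^2/σ^2))) (Ioi 0) :=
    (intOn hσ 2).const_mul _
  have h1 : IntegrableOn (fun α : ℝ => (2*κ^2/σ^2) * (α^1 * Real.exp (-α^2/σ^2))) (Ioi 0) :=
    (intOn hσ 1).const_mul _
  have hf : IntegrableOn (fun α : ℝ => (2/σ^2) * (α^3 * Real.exp (-α^2/σ^2))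
      - (4*κ*c/σ^2) * (α^2 * Real.exp (-α^2/σ^2))) (Ioi 0) := h3.sub h2
  rw [integral_add hf h1, integral_sub h3 h2,
    integral_const_mul, integral_const_mul, integral_const_mul]
  simp_rw [pow_one]
  rw [m3 hσ, m2 hσ, m1 hσ]
  field_simp
  ring

lemma abs_sq_eq (α θ φ κ : ℝ) :
    ‖(α:ℂ) * Complex.exp ((θ:ℂ) * Complex.I) - (κ:ℂ) * Complex.exp (Complex.I * (φ:ℂ))‖ ^ 2
      = α^2 - 2*κ*(Real.cos (θ - φ))*α + κ^2 := by
  rw [mul_comm Complex.I, Complex.sq_norm, Complex.normSq_apply]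
  simp [Complex.exp_ofReal_mul_I_re, Complex.exp_ofReal_mul_I_im, Real.cos_sub]
  linear_combination α^2 * (Real.sin_sq_add_cos_sq θ) + κ^2 * (Real.sin_sq_add_cos_sq φ)

noncomputable def gfun (M : ℕ) (θ : ℝ) : ℝ :=
  Real.cos (θ - (π / (4 * M) + π / (2 * M) * ((⌊2 * M * θ / π⌋ : ℤ) : ℝ)))

lemma gfun_meas (M : ℕ) : Measurable (gfun M) := by
  apply Real.measurable_cos.comp
  apply Measurable.sub measurable_id
  apply Measurable.const_add
  exact (measurable_from_top.comp (((measurable_id.const_mul _).div_const _).floor)).const_mul _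

lemma gfun_ii (M : ℕ) (a b : ℝ) : IntervalIntegrable (gfun M) volume a b := by
  refine (intervalIntegrable_const (c := (1:ℝ))).mono_fun'
    ((gfun_meas M).aestronglyMeasurable.restrict) ?_
  filter_upwards with x
  simp [gfun, Real.abs_cos_le_one]

lemma ae_ne (b : ℝ) : ∀ᵐ θ : ℝ ∂(volume : Measure ℝ), θ ≠ b := by
  rw [Filter.eventually_iff, MeasureTheory.mem_ae_iff]
  have : {θ : ℝ | θ ≠ b}ᶜ = {b} := by ext x; simp
  rw [this]
  exact measure_singleton b

lemma sector (M : ℕ) (hM : 1 ≤ M) (k : ℕ) :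
    ∫ θ in ((k:ℝ) * (π / (2 * M)))..(((k:ℝ) + 1) * (π / (2 * M))), gfun M θ
      = 2 * Real.sin (π / (4 * M)) := by
  have hM0 : (0:ℝ) < M := by exact_mod_cast hM
  have hL : (0:ℝ) < π / (2 * M) := by positivity
  have hcong : ∀ᵐ θ : ℝ ∂volume, θ ∈ Set.uIoc ((k:ℝ) * (π / (2 * M))) (((k:ℝ) + 1) * (π / (2 * M))) →
      gfun M θ = Real.cos (θ - (π / (4 * M) + π / (2 * M) * k)) := by
    filter_upwards [ae_ne (((k:ℝ) + 1) * (π / (2 * M)))] with θ hne hθ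
    rw [Set.uIoc_of_le (by nlinarith)] at hθ
    have h1 : (k:ℝ) * (π / (2 * M)) < θ := hθ.1
    have h2 : θ < ((k:ℝ) + 1) * (π / (2 * M)) := lt_of_le_of_ne hθ.2 hne
    have hfl : ⌊2 * (M:ℝ) * θ / π⌋ = (k : ℤ) := by
      rw [Int.floor_eq_iff]
      have h2M : (0:ℝ) < 2 * M := by positivity
      have h1' : (k:ℝ) * π < θ * (2 * M) := by
        rw [mul_div_assoc'] at h1
        exact (div_lt_iff₀ h2M).mp h1
      have h2' : θ * (2 * M) < ((k:ℝ) + 1) * π := by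
        rw [mul_div_assoc'] at h2
        exact (lt_div_iff₀ h2M).mp h2
      constructor
      · push_cast
        rw [le_div_iff₀ pi_pos]
        nlinarith
      · push_cast
        rw [div_lt_iff₀ pi_pos]
        nlinarith
    unfold gfun
    rw [hfl]
    push_cast
    ring_nf
  rw [intervalIntegral.integral_congr_ae hcong]
  rw [intervalIntegral.integral_comp_sub_right (fun x => Real.cos x) (π / (4 * M) + π / (2 * M) * k)]
  rw [integral_cos]
  have e1 : ((k:ℝ) + 1) * (π / (2 * M)) - (π / (4 * M) + π / (2 * M) * k) = π / (4 * M) := by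
    field_simp; ring
  have e2 : (k:ℝ) * (π / (2 * M)) - (π / (4 * M) + π / (2 * M) * k) = -(π / (4 * M)) := by
    field_simp; ring
  rw [e1, e2, Real.sin_neg]
  ring

lemma total (M : ℕ) (hM : 1 ≤ M) :
    ∫ θ in (0:ℝ)..(2 * π), gfun M θ = 8 * M * Real.sin (π / (4 * M)) := by
  have hM0 : (0:ℝ) < M := by exact_mod_cast hM
  have key := intervalIntegral.sum_integral_adjacent_intervals
    (a := fun k : ℕ => (k:ℝ) * (π / (2 * M))) (n := 4 * M)
    (fun k _ => gfun_ii M _ _)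
  push_cast at key
  rw [zero_mul, show (4:ℝ) * (M:ℝ) * (π / (2 * M)) = 2 * π by field_simp; ring] at key
  rw [← key]
  have : ∀ k ∈ Finset.range (4 * M),
      ∫ θ in ((k:ℝ) * (π / (2 * M)))..(((k:ℝ) + 1) * (π / (2 * M))), gfun M θ
        = 2 * Real.sin (π / (4 * M)) := fun k _ => sector M hM k
  rw [Finset.sum_congr rfl this, Finset.sum_const, Finset.card_range]
  ring_nf

end Aux

/-- The mean square error of the sector-wise constant conditional mean
estimator `ĥ(θ) = κ·exp(i(π/(4M) + (π/(2M))⌊2Mθ/π⌋))`, `κ = (2Mσ/√π) sin(π/(4M))`, of the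
channel `h = α e^{iθ}` (Rayleigh magnitude `α`, uniform phase `θ`) equals
`σ²(1 − (4M²/π) sin²(π/(4M)))` (equation (40)). -/
theorem stmt12 (M : ℕ) (hM : 1 ≤ M) (σ : ℝ) (hσ : 0 < σ)
    (κ : ℝ) (hκ : κ = 2 * M * σ / Real.sqrt π * Real.sin (π / (4 * M)))
    (hhat : ℝ → ℂ)
    (hhhat : ∀ θ : ℝ, hhat θ = (κ : ℂ) * Complex.exp (Complex.I *
      ((π / (4 * M) + (π / (2 * M)) * ((⌊2 * M * θ / π⌋ : ℤ) : ℝ) : ℝ) : ℂ))) :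
    (1 / (2 * π)) * ∫ θ in (0 : ℝ)..(2 * π), ∫ α in Set.Ioi (0 : ℝ),
        ‖(α : ℂ) * Complex.exp ((θ : ℂ) * Complex.I) - hhat θ‖ ^ 2 *
          (2 * α / σ ^ 2) * Real.exp (-α ^ 2 / σ ^ 2) =
      σ ^ 2 * (1 - (4 * (M : ℝ) ^ 2 / π) * Real.sin (π / (4 * M)) ^ 2) := by
  have hout : ∀ θ : ℝ, (∫ α in Set.Ioi (0 : ℝ),
      ‖(α : ℂ) * Complex.exp ((θ : ℂ) * Complex.I) - hhat θ‖ ^ 2 *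
        (2 * α / σ ^ 2) * Real.exp (-α ^ 2 / σ ^ 2))
      = σ ^ 2 + κ ^ 2 - Real.sqrt π * σ * κ * gfun M θ := by
    intro θ
    have : gfun M θ = Real.cos (θ - (π / (4 * M) + π / (2 * M) * ((⌊2 * M * θ / π⌋ : ℤ) : ℝ))) := rfl
    rw [this, ← inner_int hσ κ (Real.cos (θ - (π / (4 * M) + π / (2 * M) * ((⌊2 * M * θ / π⌋ : ℤ) : ℝ))))]
    refine setIntegral_congr_fun measurableSet_Ioi (fun α _ => ?_)
    rw [hhhat θ, abs_sq_eq]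
  simp only [hout]
  have hii : IntervalIntegrable (fun θ => Real.sqrt π * σ * κ * gfun M θ) volume 0 (2 * π) :=
    (gfun_ii M 0 (2 * π)).const_mul _
  rw [intervalIntegral.integral_sub intervalIntegrable_const hii,
    intervalIntegral.integral_const_mul, total M hM, intervalIntegral.integral_const]
  have hsp : Real.sqrt π ^ 2 = π := Real.sq_sqrt pi_pos.le
  have hsp0 : Real.sqrt π ≠ 0 := by positivity
  rw [hκ, smul_eq_mul]
  field_simp
  ring_nf
  rw [hsp]
  ring
end
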